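/- arXiv:2208.12050 — 4 statements merged into one kernel-verified Lean document; each statement's English description precedes it below -/
import Mathlib

section
/- Let M = (m_{ij}) be a Coxeter matrix on {1,…,k}, A the associated Artin group with standard generators 𝐬_1,…,𝐬_k, and (W, S) the associated Coxeter system with simple reflections S = {s_1,…,s_k}. Then the enveloping group Env(D(S^W)) of the Coxeter quandle is isomorphic to A/N, where N is the normal closure in A of the set {𝐬_i² 𝐬_j 𝐬_i^{-2} 𝐬_j^{-1} : 1 ≤ i, j ≤ k}. -/
open Quandles

/-- The alternating word `(s_i s_j)_m = s_i s_j s_i ⋯` of length `m` in the free group. -/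
def altWord {B : Type*} (i j : B) : ℕ → FreeGroup B
  | 0 => 1
  | m + 1 => FreeGroup.of i * altWord j i m

/-- The Artin relations of a Coxeter matrix `M`: for each pair `i j` with `M i j ≠ 0`
(`0` encodes `∞`), the relation `(s_i s_j)_{M i j} = (s_j s_i)_{M i j}`. -/
def artinRels {B : Type*} (M : CoxeterMatrix B) : Set (FreeGroup B) :=
  {r | ∃ i j : B, M i j ≠ 0 ∧ r = altWord i j (M i j) * (altWord j i (M i j))⁻¹}

/-- The Artin group of the Coxeter matrix `M`. -/
abbrev ArtinGroup {B : Type*} (M : CoxeterMatrix B) := PresentedGroup (artinRels M)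

/-- The Coxeter group of the Coxeter matrix `M`, as the quotient of the Artin group by
the additional relations `s_i² = 1`. -/
abbrev CoxGroup {B : Type*} (M : CoxeterMatrix B) :=
  PresentedGroup (artinRels M ∪ {r : FreeGroup B | ∃ i : B, r = FreeGroup.of i ^ 2})

/-- The Dehn quandle of a group `G` with respect to a subset `S`: the set of all
conjugates of elements of `S`, with conjugation as the quandle operation.
(The paper's `x * y = y x y⁻¹` is Mathlib's `y ◃ x`.) -/
def DehnQuandle (G : Type*) [Group G] (S : Set G) : Type _ :=
  {x : G // ∃ s ∈ S, IsConj s x}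

instance (G : Type*) [Group G] (S : Set G) : Quandle (DehnQuandle G S) where
  act x y := ⟨x.1 * y.1 * x.1⁻¹, by
    obtain ⟨s, hs, hc⟩ := y.2
    exact ⟨s, hs, hc.trans (isConj_iff.mpr ⟨x.1, rfl⟩)⟩⟩
  self_distrib := by
    rintro ⟨x, hx⟩ ⟨y, hy⟩ ⟨z, hz⟩
    apply Subtype.ext
    show x * (y * z * y⁻¹) * x⁻¹ = (x * y * x⁻¹) * (x * z * x⁻¹) * (x * y * x⁻¹)⁻¹
    group
  invAct x y := ⟨x.1⁻¹ * y.1 * x.1, by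
    obtain ⟨s, hs, hc⟩ := y.2
    exact ⟨s, hs, hc.trans (isConj_iff.mpr ⟨x.1⁻¹, by group⟩)⟩⟩
  left_inv := by
    rintro ⟨x, hx⟩ ⟨y, hy⟩
    apply Subtype.ext
    show x⁻¹ * (x * y * x⁻¹) * x = y
    group
  right_inv := by
    rintro ⟨x, hx⟩ ⟨y, hy⟩
    apply Subtype.ext
    show x * (x⁻¹ * y * x) * x⁻¹ = y
    group
  fix := by
    rintro ⟨x, hx⟩
    apply Subtype.ext
    show x * x * x⁻¹ = x
    group

/-- `Q` is an `n`-quandle: `x *ⁿ y = x` for all `x y` (the paper's `x * y` is `y ◃ x`). -/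
def IsNQuandle (Q : Type*) [Quandle Q] (n : ℕ) : Prop :=
  ∀ x y : Q, (fun a => y ◃ a)^[n] x = x

-- ===== auxiliary =====
def altProd {B : Type*} {G : Type*} [Monoid G] (f : B → G) (i j : B) : ℕ → G
  | 0 => 1
  | m + 1 => f i * altProd f j i m

lemma hom_altWord {B : Type*} {G : Type*} [Group G] (φ : FreeGroup B →* G) (i j : B) (m : ℕ) :
    φ (altWord i j m) = altProd (φ ∘ FreeGroup.of) i j m := by
  induction m generalizing i j with
  | zero => simp [altWord, altProd]
  | succ m ih => simp [altWord, altProd, ih]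

lemma lift_altWord {B : Type*} {G : Type*} [Group G] (f : B → G) (i j : B) (m : ℕ) :
    FreeGroup.lift f (altWord i j m) = altProd f i j m := by
  rw [hom_altWord]; congr 1; ext x; simp

lemma altProd_succ_right {B : Type*} {G : Type*} [Monoid G] (f : B → G) (i j : B) (m : ℕ) :
    altProd f i j (m + 1) = altProd f i j m * f (if Even m then i else j) := by
  induction m generalizing i j with
  | zero => simp [altProd]
  | succ m ih =>
    rw [show altProd f i j (m+2) = f i * altProd f j i (m+1) from rfl, ih,
      show altProd f i j (m+1) = f i * altProd f j i m from rfl, mul_assoc]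
    congr 2
    by_cases h : Even m
    · simp [h, Nat.even_add_one]
    · simp [h, Nat.even_add_one]

lemma altProd_mul_inv_comm {B : Type*} {G : Type*} [CommGroup G] (f : B → G) (i j : B) (m : ℕ) :
    altProd f i j m * (altProd f j i m)⁻¹ = (f i * (f j)⁻¹) ^ (m % 2) := by
  induction m generalizing i j with
  | zero => simp [altProd]
  | succ m ih =>
    rw [show altProd f i j (m+1) = f i * altProd f j i m from rfl,
      show altProd f j i (m+1) = f j * altProd f i j m from rfl]
    have h2 : altProd f j i m * (altProd f i j m)⁻¹ = (f j * (f i)⁻¹) ^ (m % 2) := ih j i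
    have key : f i * altProd f j i m * (f j * altProd f i j m)⁻¹
        = (f i * (f j)⁻¹) * (altProd f j i m * (altProd f i j m)⁻¹) := by
      simp [mul_inv_rev, mul_comm, mul_left_comm, mul_assoc]
    rw [key, h2]
    rcases Nat.even_or_odd m with he | ho
    · have h0 : m % 2 = 0 := Nat.even_iff.mp he
      have h1 : (m+1) % 2 = 1 := by omega
      simp [h0, h1]
    · have h0 : m % 2 = 1 := Nat.odd_iff.mp ho
      have h1 : (m+1) % 2 = 0 := by omega
      rw [h0, h1, pow_one, pow_zero]
      group

namespace Stmt9

variable {k : ℕ} (M : CoxeterMatrix (Fin k))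

abbrev QM := DehnQuandle (CoxGroup M) (Set.range (PresentedGroup.of : Fin k → CoxGroup M))

/-- simple reflections as elements of the Dehn quandle -/
def sq (i : Fin k) : QM M :=
  ⟨PresentedGroup.of i, ⟨PresentedGroup.of i, ⟨i, rfl⟩, IsConj.refl _⟩⟩

/-- relations hold in a presented group -/
lemma mk_rel_eq_one {α : Type*} (rels : Set (FreeGroup α)) {r : FreeGroup α} (h : r ∈ rels) :
    PresentedGroup.mk rels r = 1 :=
  (QuotientGroup.eq_one_iff r).mpr (Subgroup.subset_normalClosure h)

/-- PresentedGroup.mk on an altWord -/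
lemma mk_altWord {α : Type*} (rels : Set (FreeGroup α)) (i j : α) (m : ℕ) :
    PresentedGroup.mk rels (altWord i j m) =
      altProd (PresentedGroup.of : α → PresentedGroup rels) i j m :=
  hom_altWord (PresentedGroup.mk rels) i j m

/-- the Artin relation holds in the Coxeter group -/
lemma cox_braid {i j : Fin k} (h : M i j ≠ 0) :
    altProd (PresentedGroup.of : Fin k → CoxGroup M) i j (M i j) =
      altProd (PresentedGroup.of : Fin k → CoxGroup M) j i (M i j) := by
  have hr : (altWord i j (M i j) * (altWord j i (M i j))⁻¹)
      ∈ artinRels M ∪ {r : FreeGroup (Fin k) | ∃ i : Fin k, r = FreeGroup.of i ^ 2} :=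
    Or.inl ⟨i, j, h, rfl⟩
  have := mk_rel_eq_one _ hr
  rw [map_mul, map_inv, mul_inv_eq_one] at this
  rw [← mk_altWord, ← mk_altWord, this]

/-- squares of generators are trivial in the Coxeter group -/
lemma cox_sq (i : Fin k) : (PresentedGroup.of i : CoxGroup M) ^ 2 = 1 := by
  have hr : (FreeGroup.of i ^ 2)
      ∈ artinRels M ∪ {r : FreeGroup (Fin k) | ∃ i : Fin k, r = FreeGroup.of i ^ 2} :=
    Or.inr ⟨i, rfl⟩
  have := mk_rel_eq_one _ hr
  rwa [map_pow] at this

/-- shorthand for the quandle generator map into the enveloping group -/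
noncomputable def E (x : QM M) : Rack.EnvelGroup (QM M) := Rack.toEnvelGroup (QM M) x

lemma E_conj (x y : QM M) : E M (x ◃ y) = E M x * E M y * (E M x)⁻¹ := by
  have := (Rack.toEnvelGroup (QM M)).map_act (x := x) (y := y)
  rw [Quandle.conj_act_eq_conj] at this
  exact this

lemma dehn_act_val (x y : QM M) : (x ◃ y).1 = x.1 * y.1 * x.1⁻¹ := rfl

/-- the ladder elements for the braid computation -/
def uQ (i j : Fin k) : ℕ → QM M
  | 0 => sq M j
  | m + 1 => sq M i ◃ uQ j i m

lemma uQ_val (i j : Fin k) (m : ℕ) :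
    (uQ M i j (m+1)).1 = altProd (PresentedGroup.of : Fin k → CoxGroup M) i j (m+1) *
      (altProd (PresentedGroup.of : Fin k → CoxGroup M) i j m)⁻¹ := by
  induction m generalizing i j with
  | zero =>
    show (sq M i ◃ sq M i).1 = _
    rw [dehn_act_val]
    show PresentedGroup.of i * PresentedGroup.of i * (PresentedGroup.of i)⁻¹
      = (PresentedGroup.of i * 1) * (1 : CoxGroup M)⁻¹
    group
  | succ m ih =>
    show (sq M i ◃ uQ M j i (m+1)).1 = _
    rw [dehn_act_val, ih j i]
    show PresentedGroup.of i * (altProd _ j i (m+1) * (altProd _ j i m)⁻¹) *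
      (PresentedGroup.of i)⁻¹ = _
    rw [show (altProd (PresentedGroup.of : Fin k → CoxGroup M) i j (m+1+1))
        = PresentedGroup.of i * altProd PresentedGroup.of j i (m+1) from rfl,
      show (altProd (PresentedGroup.of : Fin k → CoxGroup M) i j (m+1))
        = PresentedGroup.of i * altProd PresentedGroup.of j i m from rfl]
    group

/-- the braid relation holds among the quandle generators in the enveloping group -/
lemma env_ladder (i j : Fin k) (m : ℕ) :
    altProd (fun a => E M (sq M a)) i j (m+1) * (altProd (fun a => E M (sq M a)) j i (m+1))⁻¹
      = E M (uQ M i j (m+1)) * (E M (sq M j))⁻¹ := by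
  induction m generalizing i j with
  | zero =>
    show E M (sq M i) * 1 * (E M (sq M j) * 1)⁻¹ = E M (uQ M i j 1) * (E M (sq M j))⁻¹
    have h1 : uQ M i j 1 = sq M i := Quandle.fix
    rw [h1]
    group
  | succ m ih =>
    show E M (sq M i) * altProd _ j i (m+1) *
        (E M (sq M j) * altProd _ i j (m+1))⁻¹ = _
    have h2 : uQ M i j (m+2) = sq M i ◃ uQ M j i (m+1) := rfl
    rw [h2, E_conj, mul_inv_rev]
    have ih2 := ih j i
    calc E M (sq M i) * altProd (fun a => E M (sq M a)) j i (m+1) *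
          ((altProd (fun a => E M (sq M a)) i j (m+1))⁻¹ * (E M (sq M j))⁻¹)
        = E M (sq M i) * (altProd (fun a => E M (sq M a)) j i (m+1) *
          (altProd (fun a => E M (sq M a)) i j (m+1))⁻¹) * (E M (sq M j))⁻¹ := by group
      _ = E M (sq M i) * (E M (uQ M j i (m+1)) * (E M (sq M i))⁻¹) * (E M (sq M j))⁻¹ := by
          rw [ih2]
      _ = E M (sq M i) * E M (uQ M j i (m+1)) * (E M (sq M i))⁻¹ * (E M (sq M j))⁻¹ := by group

/-- the Artin braid relation holds in the enveloping group -/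
lemma env_braid {i j : Fin k} (h : M i j ≠ 0) :
    altProd (fun a => E M (sq M a)) i j (M i j)
      = altProd (fun a => E M (sq M a)) j i (M i j) := by
  obtain ⟨m, hm⟩ : ∃ m, M i j = m + 1 := ⟨M i j - 1, by omega⟩
  have hu : uQ M i j (m+1) = sq M j := by
    apply Subtype.ext
    rw [uQ_val]
    have hb := cox_braid M h
    rw [hm] at hb
    rw [hb, show (altProd (PresentedGroup.of : Fin k → CoxGroup M) j i (m+1))
      = PresentedGroup.of j * altProd PresentedGroup.of i j m from rfl]
    show PresentedGroup.of j * altProd PresentedGroup.of i j m *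
      (altProd PresentedGroup.of i j m)⁻¹ = PresentedGroup.of j
    group
  have hl := env_ladder M i j m
  rw [hu, mul_inv_cancel] at hl
  rw [hm]
  exact mul_inv_eq_one.mp hl
/-- the set of extra relations in the Artin group -/
abbrev CRel : Set (ArtinGroup M) :=
  {g : ArtinGroup M | ∃ i j : Fin k,
      g = PresentedGroup.of i ^ 2 * PresentedGroup.of j *
          (PresentedGroup.of i ^ 2)⁻¹ * (PresentedGroup.of j)⁻¹}

abbrev GG := ArtinGroup M ⧸ Subgroup.normalClosure (CRel M)

def mkq : ArtinGroup M →* GG M := QuotientGroup.mk' _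

def tau (i : Fin k) : GG M := mkq M (PresentedGroup.of i)

lemma artin_rels_env : ∀ r ∈ artinRels M, FreeGroup.lift (fun a => E M (sq M a)) r = 1 := by
  rintro r ⟨i, j, h, rfl⟩
  rw [map_mul, map_inv, lift_altWord, lift_altWord, env_braid M h, mul_inv_cancel]

noncomputable def homA : ArtinGroup M →* Rack.EnvelGroup (QM M) :=
  PresentedGroup.toGroup (artin_rels_env M)

lemma homA_of (i : Fin k) : homA M (PresentedGroup.of i) = E M (sq M i) :=
  PresentedGroup.toGroup.of _

lemma sq_conj_quandle (i j : Fin k) : sq M i ◃ (sq M i ◃ sq M j) = sq M j := by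
  apply Subtype.ext
  rw [dehn_act_val, dehn_act_val]
  have h2 : (sq M i).1 * (sq M i).1 = 1 := by
    have := cox_sq M i
    rw [pow_two] at this
    exact this
  calc (sq M i).1 * ((sq M i).1 * (sq M j).1 * (sq M i).1⁻¹) * (sq M i).1⁻¹
      = ((sq M i).1 * (sq M i).1) * (sq M j).1 * ((sq M i).1 * (sq M i).1)⁻¹ := by group
    _ = (sq M j).1 := by rw [h2]; group

lemma env_sq_rel (i j : Fin k) :
    E M (sq M i) * E M (sq M i) * E M (sq M j) * (E M (sq M i) * E M (sq M i))⁻¹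
      = E M (sq M j) := by
  have h1 := E_conj M (sq M i) (sq M j)
  have h2 := E_conj M (sq M i) (sq M i ◃ sq M j)
  rw [sq_conj_quandle, h1] at h2
  conv_rhs => rw [h2]
  group

lemma crel_ker : Subgroup.normalClosure (CRel M) ≤ (homA M).ker := by
  apply Subgroup.normalClosure_le_normal
  rintro g ⟨i, j, rfl⟩
  rw [SetLike.mem_coe, MonoidHom.mem_ker, map_mul, map_mul, map_mul, map_inv, map_inv, map_pow,
    homA_of, homA_of, mul_inv_eq_one, pow_two]
  exact env_sq_rel M i j

noncomputable def psi : GG M →* Rack.EnvelGroup (QM M) :=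
  QuotientGroup.lift _ (homA M) (fun x hx => MonoidHom.mem_ker.mp (crel_ker M hx))

lemma psi_tau (i : Fin k) : psi M (tau M i) = E M (sq M i) := homA_of M i

lemma artin_rels_W : ∀ r ∈ artinRels M,
    FreeGroup.lift (PresentedGroup.of : Fin k → CoxGroup M) r = 1 := by
  rintro r ⟨i, j, h, rfl⟩
  rw [map_mul, map_inv, lift_altWord, lift_altWord, cox_braid M h, mul_inv_cancel]

def homAW : ArtinGroup M →* CoxGroup M := PresentedGroup.toGroup (artin_rels_W M)

lemma homAW_of (i : Fin k) : homAW M (PresentedGroup.of i) = PresentedGroup.of i :=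
  PresentedGroup.toGroup.of _

lemma crel_ker_W : Subgroup.normalClosure (CRel M) ≤ (homAW M).ker := by
  apply Subgroup.normalClosure_le_normal
  rintro g ⟨i, j, rfl⟩
  rw [SetLike.mem_coe, MonoidHom.mem_ker, map_mul, map_mul, map_mul, map_inv, map_inv, map_pow,
    homAW_of, homAW_of, cox_sq]
  group

def piW : GG M →* CoxGroup M :=
  QuotientGroup.lift _ (homAW M) (fun x hx => MonoidHom.mem_ker.mp (crel_ker_W M hx))

lemma piW_tau (i : Fin k) : piW M (tau M i) = PresentedGroup.of i := homAW_of M i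

def etaSh : QM M →◃ Quandle.Conj (CoxGroup M) where
  toFun := Subtype.val
  map_act' := @fun _ _ => rfl

noncomputable def eta : Rack.EnvelGroup (QM M) →* CoxGroup M :=
  Rack.toEnvelGroup.map (etaSh M)

lemma eta_E (x : QM M) : eta M (E M x) = x.1 := rfl

lemma gg_hom_ext {H : Type*} [Group H] {φ₁ φ₂ : GG M →* H}
    (h : ∀ i, φ₁ (tau M i) = φ₂ (tau M i)) : φ₁ = φ₂ := by
  apply QuotientGroup.monoidHom_ext
  apply PresentedGroup.ext
  exact h

lemma eta_psi : (eta M).comp (psi M) = piW M := by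
  apply gg_hom_ext
  intro i
  rw [MonoidHom.comp_apply, psi_tau, eta_E, piW_tau]
  rfl

lemma gg_generated (H : Subgroup (GG M)) (h : ∀ i, tau M i ∈ H) : ∀ g, g ∈ H := by
  intro g
  refine QuotientGroup.induction_on g (fun a => ?_)
  exact PresentedGroup.generated_by _ (H.comap (mkq M)) h a

lemma tau_sq_comm (i j : Fin k) : tau M i ^ 2 * tau M j = tau M j * tau M i ^ 2 := by
  have hm : mkq M (PresentedGroup.of i ^ 2 * PresentedGroup.of j *
      (PresentedGroup.of i ^ 2)⁻¹ * (PresentedGroup.of j)⁻¹) = 1 :=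
    (QuotientGroup.eq_one_iff _).mpr (Subgroup.subset_normalClosure ⟨i, j, rfl⟩)
  rw [map_mul, map_mul, map_mul, map_inv, map_inv, map_pow] at hm
  have h2 := mul_inv_eq_one.mp hm
  show mkq M (PresentedGroup.of i) ^ 2 * mkq M (PresentedGroup.of j)
    = mkq M (PresentedGroup.of j) * mkq M (PresentedGroup.of i) ^ 2
  conv_rhs => rw [← h2]
  group

lemma tau_sq_central (i : Fin k) (g : GG M) : g * tau M i ^ 2 = tau M i ^ 2 * g := by
  have hg : g ∈ Subgroup.centralizer {tau M i ^ 2} := by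
    refine gg_generated M _ (fun j => ?_) g
    rw [Subgroup.mem_centralizer_iff]
    rintro h hh
    rw [Set.mem_singleton_iff] at hh
    subst hh
    exact tau_sq_comm M i j
  have := Subgroup.mem_centralizer_iff.mp hg (tau M i ^ 2) rfl
  exact this.symm

lemma piW_surj : Function.Surjective (piW M) := by
  have hcomp : (piW M).comp ((mkq M).comp (PresentedGroup.mk (artinRels M)))
      = PresentedGroup.mk _ := by
    apply FreeGroup.ext_hom
    intro i
    show piW M (tau M i) = PresentedGroup.of i
    exact piW_tau M i
  intro w
  obtain ⟨u, rfl⟩ := PresentedGroup.mk_surjective _ w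
  exact ⟨mkq M (PresentedGroup.mk _ u), DFunLike.congr_fun hcomp u⟩

/-- conjugation action of the Coxeter group on the Dehn quandle -/
def dact (w : CoxGroup M) (x : QM M) : QM M :=
  ⟨w * x.1 * w⁻¹, by
    obtain ⟨s, hs, hc⟩ := x.2
    exact ⟨s, hs, hc.trans (isConj_iff.mpr ⟨w, rfl⟩)⟩⟩

lemma dact_one (x : QM M) : dact M 1 x = x := Subtype.ext (by simp [dact])

lemma dact_mul (w v : CoxGroup M) (x : QM M) :
    dact M (w * v) x = dact M w (dact M v x) := by
  apply Subtype.ext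
  show (w * v) * x.1 * (w * v)⁻¹ = w * (v * x.1 * v⁻¹) * w⁻¹
  group

lemma sq_act (i : Fin k) (x : QM M) : sq M i ◃ x = dact M (PresentedGroup.of i) x := rfl

lemma psi_conj (g : GG M) (x : QM M) :
    psi M g * E M x * (psi M g)⁻¹ = E M (dact M (piW M g) x) := by
  let H : Subgroup (GG M) :=
    { carrier := {g | ∀ x : QM M, psi M g * E M x * (psi M g)⁻¹ = E M (dact M (piW M g) x)}
      one_mem' := by
        intro x
        rw [map_one, map_one, dact_one]
        group
      mul_mem' := by
        intro a b ha hb x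
        rw [map_mul, map_mul, dact_mul]
        calc psi M a * psi M b * E M x * (psi M a * psi M b)⁻¹
            = psi M a * (psi M b * E M x * (psi M b)⁻¹) * (psi M a)⁻¹ := by group
          _ = psi M a * E M (dact M (piW M b) x) * (psi M a)⁻¹ := by rw [hb x]
          _ = E M (dact M (piW M a) (dact M (piW M b) x)) := ha _
      inv_mem' := by
        intro a ha x
        rw [map_inv, map_inv]
        have h1 := ha (dact M (piW M a)⁻¹ x)
        rw [← dact_mul, mul_inv_cancel, dact_one] at h1
        rw [← h1]
        group }
  have hall : ∀ g, g ∈ H := gg_generated M H (fun i => by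
    intro x
    rw [psi_tau, piW_tau, ← sq_act, ← E_conj])
  exact hall g x

lemma E_mem_range (x : QM M) : E M x ∈ (psi M).range := by
  obtain ⟨s, ⟨i, rfl⟩, hc⟩ := x.2
  obtain ⟨c, hc2⟩ := isConj_iff.mp hc
  obtain ⟨g, hg⟩ := piW_surj M c
  refine ⟨g * tau M i * g⁻¹, ?_⟩
  rw [map_mul, map_mul, map_inv, psi_tau]
  have h1 := psi_conj M g (sq M i)
  calc psi M g * E M (sq M i) * (psi M g)⁻¹ = E M (dact M (piW M g) (sq M i)) := h1
    _ = E M x := by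
        congr 1
        apply Subtype.ext
        rw [hg]
        exact hc2

lemma psi_surj : Function.Surjective (psi M) := by
  let H := (psi M).range
  let β : QM M →◃ Quandle.Conj H :=
    { toFun := fun x => ⟨E M x, E_mem_range M x⟩
      map_act' := @fun x y => by
        apply Subtype.ext
        show E M (x ◃ y) = (E M x) * E M y * (E M x)⁻¹
        exact E_conj M x y }
  let Φ := Rack.toEnvelGroup.map β
  let g1 := H.subtype.comp Φ
  let f0 : QM M →◃ Quandle.Conj (Rack.EnvelGroup (QM M)) :=
    (Quandle.Conj.map (MonoidHom.id _)).comp (Rack.toEnvelGroup (QM M))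
  have h2 : MonoidHom.id (Rack.EnvelGroup (QM M)) = Rack.toEnvelGroup.map f0 :=
    Rack.toEnvelGroup.univ_uniq _ _ _ _ rfl
  have h1 : g1 = Rack.toEnvelGroup.map f0 := by
    apply Rack.toEnvelGroup.univ_uniq
    apply DFunLike.ext
    intro x
    rfl
  have key : ∀ z : Rack.EnvelGroup (QM M), z ∈ H := by
    intro z
    have : g1 z = z := by rw [h1, ← h2]; rfl
    rw [← this]
    exact (Φ z).2
  intro z
  exact key z


/-! ### central subgroup generated by squares -/

def zel (i : Fin k) : GG M := tau M i ^ 2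

def ZS : Subgroup (GG M) := Subgroup.closure (Set.range (zel M))

lemma zel_center (i : Fin k) : zel M i ∈ Subgroup.center (GG M) :=
  Subgroup.mem_center_iff.mpr (fun g => tau_sq_central M i g)

lemma ZS_le_center : ZS M ≤ Subgroup.center (GG M) :=
  (Subgroup.closure_le _).mpr (by rintro x ⟨i, rfl⟩; exact zel_center M i)

instance : (ZS M).Normal := by
  constructor
  intro n hn g
  have h := Subgroup.mem_center_iff.mp (ZS_le_center M hn) g
  have : g * n * g⁻¹ = n := by rw [h]; group
  rwa [this]

def mkZ : GG M →* GG M ⧸ ZS M := QuotientGroup.mk' (ZS M)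

lemma lamW_rels : ∀ r ∈ (artinRels M ∪ {r : FreeGroup (Fin k) | ∃ a, r = FreeGroup.of a ^ 2}),
    FreeGroup.lift (fun j => mkZ M (tau M j)) r = 1 := by
  have hlift : FreeGroup.lift (fun j => mkZ M (tau M j))
      = ((mkZ M).comp ((mkq M).comp (PresentedGroup.mk (artinRels M)))) := by
    apply FreeGroup.ext_hom
    intro a
    simp only [FreeGroup.lift_apply_of]
    rfl
  rintro r (hr | ⟨a, rfl⟩)
  · rw [hlift]
    show mkZ M (mkq M (PresentedGroup.mk (artinRels M) r)) = 1
    rw [mk_rel_eq_one _ hr, map_one, map_one]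
  · rw [map_pow, FreeGroup.lift_apply_of]
    show mkZ M (tau M a) ^ 2 = 1
    rw [← map_pow]
    exact (QuotientGroup.eq_one_iff _).mpr (Subgroup.subset_closure ⟨a, rfl⟩)

def lamW : CoxGroup M →* GG M ⧸ ZS M := PresentedGroup.toGroup (lamW_rels M)

lemma lamW_piW : (lamW M).comp (piW M) = mkZ M := by
  apply gg_hom_ext
  intro i
  rw [MonoidHom.comp_apply, piW_tau]
  exact PresentedGroup.toGroup.of _

lemma mem_ZS_of_pi_one (g : GG M) (h : piW M g = 1) : g ∈ ZS M := by
  have h1 : mkZ M g = 1 := by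
    rw [← lamW_piW, MonoidHom.comp_apply, h, map_one]
  exact (QuotientGroup.eq_one_iff _).mp h1

/-! ### relations among the squares across odd edges -/

lemma tau_altProd (i j : Fin k) (m : ℕ) :
    mkq M (PresentedGroup.mk (artinRels M) (altWord i j m)) = altProd (tau M) i j m :=
  hom_altWord ((mkq M).comp (PresentedGroup.mk (artinRels M))) i j m

lemma gg_braid {i j : Fin k} (h : M i j ≠ 0) :
    altProd (tau M) i j (M i j) = altProd (tau M) j i (M i j) := by
  have hr := mk_rel_eq_one (artinRels M) (show _ ∈ artinRels M from ⟨i, j, h, rfl⟩)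
  have h1 : mkq M (PresentedGroup.mk (artinRels M)
      (altWord i j (M i j) * (altWord j i (M i j))⁻¹)) = 1 := by rw [hr, map_one]
  simp only [map_mul, map_inv] at h1
  rw [tau_altProd, tau_altProd, mul_inv_eq_one] at h1
  exact h1

lemma zel_eq_of_odd {i j : Fin k} (h : Odd (M i j)) : zel M i = zel M j := by
  obtain ⟨c, hc⟩ := h
  have h0 : M i j ≠ 0 := by omega
  have hb := gg_braid M h0
  have h1 : altProd (tau M) i j (M i j) = altProd (tau M) i j (2 * c) * tau M i := by
    rw [hc, altProd_succ_right, if_pos (even_two_mul c)]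
  have h2 : altProd (tau M) j i (M i j) = tau M j * altProd (tau M) i j (2 * c) := by
    rw [hc]; rfl
  have key : altProd (tau M) i j (2 * c) * tau M i
      = tau M j * altProd (tau M) i j (2 * c) := by rw [← h1, hb, h2]
  set p := altProd (tau M) i j (2 * c) with hp
  have hconj : tau M j = p * tau M i * p⁻¹ := by rw [key]; group
  show tau M i ^ 2 = tau M j ^ 2
  rw [hconj]
  have hcen := tau_sq_central M i p
  calc tau M i ^ 2 = p * tau M i ^ 2 * p⁻¹ := by rw [hcen]; group
    _ = (p * tau M i * p⁻¹) ^ 2 := by rw [pow_two, pow_two]; group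

lemma zel_eq_of_rho {i j : Fin k} (h : Relation.EqvGen (fun a b => Odd (M a b)) i j) :
    zel M i = zel M j := by
  induction h with
  | rel a b hab => exact zel_eq_of_odd M hab
  | refl a => rfl
  | symm a b _ ih => exact ih.symm
  | trans a b c _ _ ih1 ih2 => exact ih1.trans ih2

/-! ### parity homomorphisms -/

open scoped Classical in
noncomputable def vmod (i j : Fin k) : ZMod 2 :=
  if Relation.EqvGen (fun a b => Odd (M a b)) i j then 1 else 0

lemma rho_iff {i a b : Fin k} (h : Relation.EqvGen (fun a b => Odd (M a b)) a b) :
    Relation.EqvGen (fun a b => Odd (M a b)) i a ↔ Relation.EqvGen (fun a b => Odd (M a b)) i b :=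
  ⟨fun g => Relation.EqvGen.trans _ _ _ g h, fun g => Relation.EqvGen.trans _ _ _ g (Relation.EqvGen.symm _ _ h)⟩

lemma vmod_congr {i a b : Fin k} (h : Relation.EqvGen (fun a b => Odd (M a b)) a b) :
    vmod M i a = vmod M i b := by
  classical
  unfold vmod
  exact if_congr (rho_iff M h) rfl rfl

lemma theta_rels (i : Fin k) :
    ∀ r ∈ (artinRels M ∪ {r : FreeGroup (Fin k) | ∃ a : Fin k, r = FreeGroup.of a ^ 2}),
    FreeGroup.lift (fun j => Multiplicative.ofAdd (vmod M i j)) r = 1 := by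
  rintro r (⟨a, b, hab, rfl⟩ | ⟨a, rfl⟩)
  · rw [map_mul, map_inv, lift_altWord, lift_altWord, altProd_mul_inv_comm]
    rcases Nat.even_or_odd (M a b) with he | ho
    · rw [Nat.even_iff.mp he, pow_zero]
    · rw [Nat.odd_iff.mp ho, pow_one, vmod_congr M (Relation.EqvGen.rel a b ho), mul_inv_cancel]
  · rw [map_pow, FreeGroup.lift_apply_of, pow_two, ← ofAdd_add, CharTwo.add_self_eq_zero,
      ofAdd_zero]

noncomputable def theta (i : Fin k) : CoxGroup M →* Multiplicative (ZMod 2) :=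
  PresentedGroup.toGroup (theta_rels M i)

lemma theta_of (i j : Fin k) :
    theta M i (PresentedGroup.of j) = Multiplicative.ofAdd (vmod M i j) :=
  PresentedGroup.toGroup.of _

open scoped Classical in
noncomputable def fQ (i : Fin k) : QM M →◃ Quandle.Conj (Multiplicative ℤ) where
  toFun x := Multiplicative.ofAdd (if theta M i x.1 = 1 then (0:ℤ) else 1)
  map_act' := @fun x y => by
    have hcancel : ∀ {H : Type} [CommGroup H] (a b : H), a * b * a⁻¹ = b := by
      intro H _ a b
      rw [mul_comm a b, mul_inv_cancel_right]
    have hval : theta M i ((x ◃ y).1) = theta M i y.1 := by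
      rw [dehn_act_val, map_mul, map_mul, map_inv]
      exact hcancel _ _
    show Multiplicative.ofAdd (if theta M i ((x ◃ y).1) = 1 then (0:ℤ) else 1) = _ ◃ _
    rw [hval, Quandle.conj_act_eq_conj, hcancel]

noncomputable def chi (i : Fin k) : Rack.EnvelGroup (QM M) →* Multiplicative ℤ :=
  Rack.toEnvelGroup.map (fQ M i)

lemma chi_E (i : Fin k) (x : QM M) :
    chi M i (E M x) = Multiplicative.ofAdd (if theta M i x.1 = 1 then (0:ℤ) else 1) := rfl

noncomputable def mu (i : Fin k) : GG M →* Multiplicative ℤ := (chi M i).comp (psi M)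

open scoped Classical in
lemma mu_tau (i j : Fin k) :
    mu M i (tau M j)
      = Multiplicative.ofAdd (if Relation.EqvGen (fun a b => Odd (M a b)) i j then (1:ℤ) else 0) := by
  show chi M i (psi M (tau M j)) = _
  rw [psi_tau, chi_E]
  have hth : theta M i ((sq M j).1) = Multiplicative.ofAdd (vmod M i j) := theta_of M i j
  rw [hth]
  by_cases h : Relation.EqvGen (fun a b => Odd (M a b)) i j
  · rw [if_pos h]
    have hv : vmod M i j = 1 := by unfold vmod; rw [if_pos h]
    rw [hv, if_neg (by decide : ¬ (Multiplicative.ofAdd (1 : ZMod 2)) = 1)]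
  · rw [if_neg h]
    have hv : vmod M i j = 0 := by unfold vmod; rw [if_neg h]
    rw [hv, if_pos (by decide : (Multiplicative.ofAdd (0 : ZMod 2)) = 1)]

open scoped Classical in
lemma mu_zel (i j : Fin k) :
    mu M i (zel M j)
      = Multiplicative.ofAdd (if Relation.EqvGen (fun a b => Odd (M a b)) i j then (2:ℤ) else 0) := by
  show mu M i (tau M j ^ 2) = _
  rw [map_pow, mu_tau, pow_two, ← ofAdd_add]
  by_cases h : Relation.EqvGen (fun a b => Odd (M a b)) i j
  · rw [if_pos h, if_pos h]
    norm_num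
  · rw [if_neg h, if_neg h]
    norm_num

open scoped Classical IsMulCommutative in
lemma psi_inj : Function.Injective (psi M) := by
  refine (injective_iff_map_eq_one (psi M)).mpr (fun g hg => ?_)
  have hpi : piW M g = 1 := by
    have h := DFunLike.congr_fun (eta_psi M) g
    rw [← h]
    show eta M (psi M g) = 1
    rw [hg, map_one]
  have hZ : g ∈ ZS M := mem_ZS_of_pi_one M g hpi
  letI st : Setoid (Fin k) := Relation.EqvGen.setoid (fun a b => Odd (M a b))
  haveI : Fintype (Quotient st) := Quotient.fintype st
  set K := Subgroup.center (GG M) with hK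
  let zK : Fin k → K := fun j => ⟨zel M j, zel_center M j⟩
  let zKq : Quotient st → K := fun c => zK c.out
  have hzK : ∀ j : Fin k, zK j = zKq (Quotient.mk st j) := by
    intro j
    apply Subtype.ext
    exact zel_eq_of_rho M (Relation.EqvGen.symm _ _ (Quotient.mk_out j))
  have hclos : (⟨g, ZS_le_center M hZ⟩ : K) ∈ Subgroup.closure (Set.range zK) := by
    refine Subgroup.closure_induction
      (p := fun x hx => (⟨x, ZS_le_center M hx⟩ : K) ∈ Subgroup.closure (Set.range zK))
      ?_ ?_ ?_ ?_ hZ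
    · rintro x ⟨j, rfl⟩
      exact Subgroup.subset_closure ⟨j, rfl⟩
    · exact one_mem _
    · intro x y hx hy px py
      exact mul_mem px py
    · intro x hx px
      exact inv_mem px
  have hranges : Subgroup.closure (Set.range zK) ≤ Subgroup.closure (Set.range zKq) := by
    refine (Subgroup.closure_le _).mpr ?_
    rintro x ⟨j, rfl⟩
    rw [hzK j]
    exact Subgroup.subset_closure ⟨_, rfl⟩
  have hmem2 := hranges hclos
  have hdecomp : ∃ n : Quotient st → ℤ,
      (⟨g, ZS_le_center M hZ⟩ : K) = ∏ c : Quotient st, zKq c ^ n c := by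
    refine Subgroup.closure_induction
      (p := fun x _ => ∃ n : Quotient st → ℤ, x = ∏ c : Quotient st, zKq c ^ n c)
      ?_ ?_ ?_ ?_ hmem2
    · rintro x ⟨c0, rfl⟩
      refine ⟨fun c => if c = c0 then 1 else 0, ?_⟩
      rw [Finset.prod_eq_single c0 (fun b _ hb => by simp [hb])
        (fun h => absurd (Finset.mem_univ c0) h)]
      simp
    · exact ⟨fun _ => 0, by simp⟩
    · rintro x y hx hy ⟨n, rfl⟩ ⟨m, rfl⟩
      refine ⟨fun c => n c + m c, ?_⟩
      rw [← Finset.prod_mul_distrib]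
      exact Finset.prod_congr rfl (fun c _ => (zpow_add _ _ _).symm)
    · rintro x hx ⟨n, rfl⟩
      refine ⟨fun c => - n c, ?_⟩
      rw [← Finset.prod_inv_distrib]
      exact Finset.prod_congr rfl (fun c _ => (zpow_neg _ _).symm)
  obtain ⟨n, hn⟩ := hdecomp
  have hzero : ∀ c' : Quotient st, n c' = 0 := by
    intro c'
    have h1 : mu M c'.out g = 1 := by
      show chi M c'.out (psi M g) = 1
      rw [hg, map_one]
    have h2 : ((mu M c'.out).comp (Subgroup.subtype K)) (⟨g, ZS_le_center M hZ⟩ : K) = 1 := h1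
    rw [hn, map_prod] at h2
    have h3 : ∀ c : Quotient st, ((mu M c'.out).comp (Subgroup.subtype K)) (zKq c ^ n c)
        = Multiplicative.ofAdd (if c' = c then (2:ℤ) * n c else 0) := by
      intro c
      rw [map_zpow]
      show (mu M c'.out (zel M c.out)) ^ (n c) = _
      rw [mu_zel]
      by_cases h : c' = c
      · rw [if_pos (show Relation.EqvGen (fun a b => Odd (M a b)) c'.out c.out from
            Quotient.out_equiv_out.mpr h), if_pos h, ← Int.ofAdd_mul]
      · rw [if_neg (show ¬ Relation.EqvGen (fun a b => Odd (M a b)) c'.out c.out from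
            fun hr => h (Quotient.out_equiv_out.mp hr)), if_neg h]
        simp
    rw [Finset.prod_congr rfl (fun c _ => h3 c)] at h2
    have h4 := congrArg Multiplicative.toAdd h2
    rw [toAdd_prod] at h4
    simp only [toAdd_ofAdd, toAdd_one] at h4
    rw [Finset.sum_ite_eq] at h4
    simp only [Finset.mem_univ, if_true] at h4
    omega
  have hone : (⟨g, ZS_le_center M hZ⟩ : K) = 1 := by
    rw [hn]
    apply Finset.prod_eq_one
    intro c _
    rw [hzero c, zpow_zero]
  exact congrArg Subtype.val hone


end Stmt9

/-- the enveloping group of the Coxeter quandle `D(S^W)` is isomorphic to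
`A/N`, where `A` is the Artin group and `N` is the normal closure of
`{𝐬ᵢ² 𝐬ⱼ 𝐬ᵢ⁻² 𝐬ⱼ⁻¹}`. -/
theorem stmt_9 {k : ℕ} (M : CoxeterMatrix (Fin k)) (hM : ∀ i j, i ≠ j → M i j ≠ 1) :
    Nonempty
      (Rack.EnvelGroup (DehnQuandle (CoxGroup M)
          (Set.range (PresentedGroup.of : Fin k → CoxGroup M))) ≃*
        ArtinGroup M ⧸ Subgroup.normalClosure
          {g : ArtinGroup M | ∃ i j : Fin k,
            g = PresentedGroup.of i ^ 2 * PresentedGroup.of j *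
                (PresentedGroup.of i ^ 2)⁻¹ * (PresentedGroup.of j)⁻¹}) := by
  exact ⟨(MulEquiv.ofBijective (Stmt9.psi M) ⟨Stmt9.psi_inj M, Stmt9.psi_surj M⟩).symm⟩
end

section
/- Let n ≥ 5, let B_n be the braid group on n strands with standard generating set S = {σ_1,…,σ_{n−1}}, and let D(S^{B_n}) be its Dehn quandle. If f : D(S^{B_n}) → Q is a surjective quandle homomorphism onto a quandle Q with at least two elements, then Q has at least n(n−1)/2 elements. -/
open Quandles

/-- The braid relations: `σᵢ σⱼ σᵢ = σⱼ σᵢ σⱼ` for `j = i + 1`, and `σᵢ σⱼ = σⱼ σᵢ`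
for `j ≥ i + 2` (indices `0, …, n - 2` for the braid group on `n` strands). -/
def braidRels (n : ℕ) : Set (FreeGroup (Fin (n - 1))) :=
  {r | ∃ i j : Fin (n - 1),
      ((j : ℕ) = (i : ℕ) + 1 ∧
        r = FreeGroup.of i * FreeGroup.of j * FreeGroup.of i *
            (FreeGroup.of j * FreeGroup.of i * FreeGroup.of j)⁻¹) ∨
      ((i : ℕ) + 2 ≤ (j : ℕ) ∧
        r = FreeGroup.of i * FreeGroup.of j * (FreeGroup.of i)⁻¹ * (FreeGroup.of j)⁻¹)}

/-- The braid group on `n` strands. -/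
abbrev BraidGroup (n : ℕ) := PresentedGroup (braidRels n)


namespace Stmt10

open PresentedGroup

variable {n : ℕ}

private lemma rel_one {r : FreeGroup (Fin (n-1))} (hr : r ∈ braidRels n) :
    PresentedGroup.mk (braidRels n) r = 1 :=
  (QuotientGroup.eq_one_iff r).mpr (Subgroup.subset_normalClosure hr)

lemma braid_adj (i j : Fin (n-1)) (h : (j:ℕ) = (i:ℕ)+1) :
    (of i * of j * of i : BraidGroup n) = of j * of i * of j := by
  have h1 := rel_one (n := n) ⟨i, j, Or.inl ⟨h, rfl⟩⟩
  simp only [map_mul, map_inv, mul_inv_eq_one] at h1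
  exact h1

lemma braid_comm (i j : Fin (n-1)) (h : (i:ℕ) + 2 ≤ (j:ℕ)) :
    (of i * of j : BraidGroup n) = of j * of i := by
  have h1 := rel_one (n := n) ⟨i, j, Or.inr ⟨h, rfl⟩⟩
  simp only [map_mul, map_inv] at h1
  have h2 : (of i * of j * (of i)⁻¹ * (of j)⁻¹ : BraidGroup n) = 1 := h1
  group at h2 ⊢
  rw [← mul_inv_eq_one]
  group
  exact h2

/-- the `i`-th generator, or `1` if out of range. -/
def sg (n i : ℕ) : BraidGroup n := if h : i < n - 1 then of ⟨i, h⟩ else 1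

lemma sg_braid {i : ℕ} (h : i + 1 < n - 1) :
    sg n i * sg n (i+1) * sg n i = sg n (i+1) * sg n i * sg n (i+1) := by
  have h0 : i < n - 1 := by omega
  simp only [sg, dif_pos h, dif_pos h0]
  exact braid_adj ⟨i, h0⟩ ⟨i+1, h⟩ rfl

lemma sg_comm {i j : ℕ} (h : i + 2 ≤ j) :
    sg n i * sg n j = sg n j * sg n i := by
  by_cases hj : j < n - 1
  · have hi : i < n - 1 := by omega
    simp only [sg, dif_pos hj, dif_pos hi]
    exact braid_comm ⟨i, hi⟩ ⟨j, hj⟩ h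
  · simp [sg, dif_neg hj]

end Stmt10
namespace Stmt10

variable {n : ℕ}

lemma comm_sg {i j : ℕ} (h : i + 2 ≤ j) : Commute (sg n i) (sg n j) := sg_comm h

/-- the band generator `a_{i,j}` (`i < j`), a conjugate of `sg i`. -/
def band (n i : ℕ) : ℕ → BraidGroup n
  | 0 => 1
  | j+1 => if j ≤ i then sg n i else sg n j * band n i j * (sg n j)⁻¹

lemma band_base (i : ℕ) : band n i (i+1) = sg n i := by
  rw [band, if_pos le_rfl]

lemma band_succ {i j : ℕ} (h : i < j) :
    band n i (j+1) = sg n j * band n i j * (sg n j)⁻¹ := by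
  rw [band, if_neg (by omega)]

lemma comm_band_gt {i j t : ℕ} (hij : i < j) (ht : j + 1 ≤ t) :
    Commute (sg n t) (band n i j) := by
  induction j with
  | zero => omega
  | succ j ih =>
    rcases Nat.lt_or_ge i j with hij' | hij'
    · rw [band_succ hij']
      have h1 : Commute (sg n t) (sg n j) := (comm_sg (by omega)).symm
      exact (h1.mul_right (ih hij' (by omega))).mul_right h1.inv_right
    · have : i = j := by omega
      subst this
      rw [band_base]
      exact (comm_sg (by omega)).symm

lemma comm_band_lt {i j t : ℕ} (hij : i < j) (ht : t + 2 ≤ i) :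
    Commute (sg n t) (band n i j) := by
  induction j with
  | zero => omega
  | succ j ih =>
    rcases Nat.lt_or_ge i j with hij' | hij'
    · rw [band_succ hij']
      have h1 : Commute (sg n t) (sg n j) := comm_sg (by omega)
      exact (h1.mul_right (ih hij')).mul_right h1.inv_right
    · have : i = j := by omega
      subst this
      rw [band_base]
      exact comm_sg (by omega)

lemma comm_band_interior {i j t : ℕ} (hit : i < t) (htj : t + 2 ≤ j) (hjn : j ≤ n - 1) :
    Commute (sg n t) (band n i j) := by
  have main : ∀ j, t + 2 ≤ j → j ≤ n - 1 → Commute (sg n t) (band n i j) := by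
    intro j hj
    induction j, hj using Nat.le_induction with
    | base =>
      intro hjn
      have hbr := sg_braid (n := n) (i := t) (by omega)
      have hW : Commute (sg n (t+1)) (band n i t) := comm_band_gt hit (by omega)
      have hb2 : band n i (t+1) = sg n t * band n i t * (sg n t)⁻¹ := band_succ hit
      have hb1 : band n i (t+2) = sg n (t+1) * band n i (t+1) * (sg n (t+1))⁻¹ :=
        band_succ (by omega)
      set a := sg n t
      set b := sg n (t+1)
      set W := band n i t
      have key : a * (b * (a * W * a⁻¹) * b⁻¹) * a⁻¹ = b * (a * W * a⁻¹) * b⁻¹ := by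
        calc a * (b * (a * W * a⁻¹) * b⁻¹) * a⁻¹
            = (a*b*a) * W * (a*b*a)⁻¹ := by group
          _ = (b*a*b) * W * (b*a*b)⁻¹ := by rw [hbr]
          _ = b*a*(b*W)*(b⁻¹*a⁻¹*b⁻¹) := by group
          _ = b*a*(W*b)*(b⁻¹*a⁻¹*b⁻¹) := by rw [hW.eq]
          _ = b * (a * W * a⁻¹) * b⁻¹ := by group
      rw [hb1, hb2]
      show a * (b * (a * W * a⁻¹) * b⁻¹) = (b * (a * W * a⁻¹) * b⁻¹) * a
      conv_lhs => rw [show a * (b * (a * W * a⁻¹) * b⁻¹)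
          = (a * (b * (a * W * a⁻¹) * b⁻¹) * a⁻¹) * a by group, key]
    | succ j hj ih =>
      intro hjn'
      rw [band_succ (by omega : i < j)]
      have h1 : Commute (sg n t) (sg n j) := comm_sg (by omega)
      exact (h1.mul_right (ih (by omega))).mul_right h1.inv_right
  exact main j htj hjn

lemma band_conj_left {i j : ℕ} (h : i + 2 ≤ j) (hjn : j ≤ n - 1) :
    sg n i * band n i j * (sg n i)⁻¹ = band n (i+1) j := by
  have main : ∀ j, i + 2 ≤ j → j ≤ n - 1 →
      sg n i * band n i j * (sg n i)⁻¹ = band n (i+1) j := by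
    intro j hj
    induction j, hj using Nat.le_induction with
    | base =>
      intro hjn
      have hbr := sg_braid (n := n) (i := i) (by omega)
      have hb1 : band n i (i+2) = sg n (i+1) * band n i (i+1) * (sg n (i+1))⁻¹ :=
        band_succ (by omega)
      rw [hb1, band_base]
      have : band n (i+1) (i+2) = sg n (i+1) := band_base (i+1)
      rw [this]
      set a := sg n i
      set b := sg n (i+1)
      calc a * (b * a * b⁻¹) * a⁻¹ = (a*b*a) * (b⁻¹*a⁻¹) := by group
        _ = (b*a*b) * (b⁻¹*a⁻¹) := by rw [hbr]
        _ = b := by group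
    | succ j hj ih =>
      intro hjn'
      rw [band_succ (by omega : i < j), band_succ (by omega : i + 1 < j)]
      have h1 : Commute (sg n i) (sg n j) := comm_sg (by omega)
      have ihe := ih (by omega)
      calc sg n i * (sg n j * band n i j * (sg n j)⁻¹) * (sg n i)⁻¹
          = (sg n i * sg n j) * band n i j * ((sg n j)⁻¹ * (sg n i)⁻¹) := by group
        _ = (sg n j * sg n i) * band n i j * ((sg n i)⁻¹ * (sg n j)⁻¹) := by
            rw [h1.eq, h1.inv_inv.eq]
        _ = sg n j * (sg n i * band n i j * (sg n i)⁻¹) * (sg n j)⁻¹ := by group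
        _ = sg n j * band n (i+1) j * (sg n j)⁻¹ := by rw [ihe]
  exact main j h hjn

end Stmt10
namespace Stmt10

open Quandles

variable {n : ℕ}

/-- The set of conjugates of generators. -/
def DS (n : ℕ) : Set (BraidGroup n) :=
  {x | ∃ s ∈ Set.range (PresentedGroup.of : Fin (n-1) → BraidGroup n), IsConj s x}

lemma conj_mem {x : BraidGroup n} (g : BraidGroup n) (hx : x ∈ DS n) :
    g * x * g⁻¹ ∈ DS n := by
  obtain ⟨s, hs, hc⟩ := hx
  exact ⟨s, hs, hc.trans (isConj_iff.mpr ⟨g, rfl⟩)⟩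

lemma sg_mem {i : ℕ} (h : i < n - 1) : sg n i ∈ DS n := by
  refine ⟨sg n i, ⟨⟨i, h⟩, ?_⟩, IsConj.refl _⟩
  simp [sg, dif_pos h]

lemma band_mem {i j : ℕ} (hij : i < j) (hjn : j ≤ n - 1) : band n i j ∈ DS n := by
  induction j with
  | zero => omega
  | succ j ih =>
    rcases Nat.lt_or_ge i j with hij' | hij'
    · rw [band_succ hij']
      exact conj_mem _ (ih hij' (by omega))
    · have : i = j := by omega
      subst this
      rw [band_base]
      exact sg_mem (by omega)

section Fmachinery

variable {Q : Type*} [Quandle Q]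
  (f : DehnQuandle (BraidGroup n)
      (Set.range (PresentedGroup.of : Fin (n - 1) → BraidGroup n)) →◃ Q)
  (hn : 5 ≤ n)

open scoped Classical

/-- totalization of `f`. -/
noncomputable def FF (x : BraidGroup n) : Q :=
  if h : x ∈ DS n then f ⟨x, h⟩ else f ⟨sg n 0, sg_mem (by omega)⟩

lemma FF_eq {x : BraidGroup n} (h : x ∈ DS n) : FF f hn x = f ⟨x, h⟩ := dif_pos h

lemma FactP {x y : BraidGroup n} (hx : x ∈ DS n) (hy : y ∈ DS n) :
    FF f hn (x * y * x⁻¹) = FF f hn x ◃ FF f hn y := by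
  rw [FF_eq f hn (conj_mem x hy), FF_eq f hn hx, FF_eq f hn hy]
  exact f.map_act (x := (⟨x, hx⟩ : DehnQuandle _ _)) (y := ⟨y, hy⟩)

lemma FactN {x y : BraidGroup n} (hx : x ∈ DS n) (hy : y ∈ DS n) :
    FF f hn (x⁻¹ * y * x) = FF f hn x ◃⁻¹ FF f hn y := by
  have h1 : x * (x⁻¹ * y * x) * x⁻¹ = y := by group
  have h2 := FactP f hn hx (conj_mem x⁻¹ hy)
  rw [inv_inv] at h2
  rw [h1] at h2
  rw [h2, Rack.invAct_act_eq]

lemma act_mv {x y z : BraidGroup n} (hx : x ∈ DS n) (hy : y ∈ DS n) (hz : z ∈ DS n)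
    (h : FF f hn x = FF f hn y) :
    FF f hn (x * z * x⁻¹) = FF f hn (y * z * y⁻¹) := by
  rw [FactP f hn hx hz, FactP f hn hy hz, h]

lemma mvP {t : ℕ} (htr : t < n - 1) {x y : BraidGroup n} (hx : x ∈ DS n) (hy : y ∈ DS n)
    (h : FF f hn x = FF f hn y) :
    FF f hn (sg n t * x * (sg n t)⁻¹) = FF f hn (sg n t * y * (sg n t)⁻¹) := by
  rw [FactP f hn (sg_mem htr) hx, FactP f hn (sg_mem htr) hy, h]

lemma mvN {t : ℕ} (htr : t < n - 1) {x y : BraidGroup n} (hx : x ∈ DS n) (hy : y ∈ DS n)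
    (h : FF f hn x = FF f hn y) :
    FF f hn ((sg n t)⁻¹ * x * sg n t) = FF f hn ((sg n t)⁻¹ * y * sg n t) := by
  rw [FactN f hn (sg_mem htr) hx, FactN f hn (sg_mem htr) hy, h]

/-- The key trick: if `u ~ v`, `z` commutes with `u` and `z` braids with `v`,
then `z ~ v`. -/
lemma ztrick {u v z : BraidGroup n} (hu : u ∈ DS n) (hv : v ∈ DS n) (hz : z ∈ DS n)
    (hcomm : u * z * u⁻¹ = z) (hbr : z * v * z = v * z * v)
    (h : FF f hn u = FF f hn v) : FF f hn z = FF f hn v := by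
  have h1 : FF f hn z = FF f hn (v * z * v⁻¹) := by
    have h' := act_mv f hn hu hv hz h
    rwa [hcomm] at h'
  have h2 : FF f hn (z * (v * z * v⁻¹) * z⁻¹) = FF f hn z ◃ FF f hn (v * z * v⁻¹) :=
    FactP f hn hz (conj_mem v hz)
  have h3 : z * (v * z * v⁻¹) * z⁻¹ = v := by
    rw [show z * (v * z * v⁻¹) * z⁻¹ = (z * v * z) * (v⁻¹ * z⁻¹) by group, hbr]
    group
  rw [h3, ← h1] at h2
  rw [h2, Quandle.fix]

lemma shrinkR {i j l : ℕ} {X : BraidGroup n} (hij : i < j) (hjl : j ≤ l) (hln : l ≤ n - 1)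
    (hX : X ∈ DS n) (hcomm : ∀ t, j ≤ t → t < l → Commute (sg n t) X)
    (heq : FF f hn (band n i l) = FF f hn X) :
    FF f hn (band n i j) = FF f hn X := by
  induction l, hjl using Nat.le_induction with
  | base => exact heq
  | succ l hl ih =>
    apply ih (by omega)
    · intro t ht1 ht2; exact hcomm t ht1 (by omega)
    · have hb : band n i (l+1) = sg n l * band n i l * (sg n l)⁻¹ :=
        band_succ (by omega)
      have hsl : sg n l ∈ DS n := sg_mem (by omega)
      have hbl : band n i l ∈ DS n := band_mem (by omega) (by omega)
      have h2 : FF f hn (band n i (l+1)) = FF f hn (sg n l) ◃ FF f hn (band n i l) := by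
        rw [hb]; exact FactP f hn hsl hbl
      have hXc : (sg n l)⁻¹ * X * sg n l = X := by
        have hc := (hcomm l hl (by omega)).inv_left.eq
        rw [hc]; group
      calc FF f hn (band n i l)
          = FF f hn (sg n l) ◃⁻¹ (FF f hn (sg n l) ◃ FF f hn (band n i l)) :=
            (Rack.invAct_act_eq _ _).symm
        _ = FF f hn (sg n l) ◃⁻¹ FF f hn X := by rw [← h2, heq]
        _ = FF f hn ((sg n l)⁻¹ * X * sg n l) := (FactN f hn hsl hX).symm
        _ = FF f hn X := by rw [hXc]

lemma shrinkL {i m j : ℕ} {X : BraidGroup n} (him : i ≤ m) (hmj : m < j) (hjn : j ≤ n - 1)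
    (hX : X ∈ DS n) (hcomm : ∀ t, i ≤ t → t < m → Commute (sg n t) X)
    (heq : FF f hn (band n i j) = FF f hn X) :
    FF f hn (band n m j) = FF f hn X := by
  induction m, him using Nat.le_induction with
  | base => exact heq
  | succ m hm ih =>
    have h0 : FF f hn (band n m j) = FF f hn X := by
      apply ih (by omega)
      intro t ht1 ht2; exact hcomm t ht1 (by omega)
    have hb : sg n m * band n m j * (sg n m)⁻¹ = band n (m+1) j :=
      band_conj_left (by omega) hjn
    have hsm : sg n m ∈ DS n := sg_mem (by omega)
    have hbm : band n m j ∈ DS n := band_mem (by omega) hjn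
    have hXc : sg n m * X * (sg n m)⁻¹ = X := by
      have hc := (hcomm m hm (by omega)).eq
      rw [hc]; group
    calc FF f hn (band n (m+1) j)
        = FF f hn (sg n m * band n m j * (sg n m)⁻¹) := by rw [hb]
      _ = FF f hn (sg n m) ◃ FF f hn (band n m j) := FactP f hn hsm hbm
      _ = FF f hn (sg n m) ◃ FF f hn X := by rw [h0]
      _ = FF f hn (sg n m * X * (sg n m)⁻¹) := (FactP f hn hsm hX).symm
      _ = FF f hn X := by rw [hXc]

lemma shrinkR_pair {a b j l : ℕ} (ha : a < j) (hb : b < j) (hjl : j ≤ l) (hln : l ≤ n - 1)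
    (heq : FF f hn (band n a l) = FF f hn (band n b l)) :
    FF f hn (band n a j) = FF f hn (band n b j) := by
  induction l, hjl using Nat.le_induction with
  | base => exact heq
  | succ l hl ih =>
    apply ih (by omega)
    have hba : band n a (l+1) = sg n l * band n a l * (sg n l)⁻¹ := band_succ (by omega)
    have hbb : band n b (l+1) = sg n l * band n b l * (sg n l)⁻¹ := band_succ (by omega)
    have hsl : sg n l ∈ DS n := sg_mem (by omega)
    have h1 := heq
    rw [hba, hbb, FactP f hn hsl (band_mem (by omega) (by omega)),
      FactP f hn hsl (band_mem (by omega) (by omega)), Rack.left_cancel] at h1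
    exact h1

end Fmachinery

end Stmt10
namespace Stmt10

open Quandles

variable {n : ℕ}

lemma commute_conj {G : Type*} [Group G] {u z : G} (h : Commute u z) :
    u * z * u⁻¹ = z := by rw [h.eq]; group

lemma conj_braid {G : Type*} [Group G] {g x y : G} (h : x*y*x = y*x*y)
    (hg : g*x*g⁻¹ = x) : x*(g*y*g⁻¹)*x = (g*y*g⁻¹)*x*(g*y*g⁻¹) := by
  conv_lhs => rw [← hg]
  calc (g*x*g⁻¹)*(g*y*g⁻¹)*(g*x*g⁻¹) = g*(x*y*x)*g⁻¹ := by group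
    _ = g*(y*x*y)*g⁻¹ := by rw [h]
    _ = (g*y*g⁻¹)*(g*x*g⁻¹)*(g*y*g⁻¹) := by group
    _ = (g*y*g⁻¹)*x*(g*y*g⁻¹) := by rw [hg]

section Cases

variable {Q : Type*} [Quandle Q]
  (f : DehnQuandle (BraidGroup n)
      (Set.range (PresentedGroup.of : Fin (n - 1) → BraidGroup n)) →◃ Q)
  (hn : 5 ≤ n)

/-- Some two adjacent generators have equal image. -/
def AdjRel : Prop := ∃ t, t + 1 < n - 1 ∧ FF f hn (sg n t) = FF f hn (sg n (t+1))

lemma gap_endgame {i k : ℕ} (h2 : i + 2 ≤ k) (hk : k < n - 1)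
    (heq : FF f hn (sg n i) = FF f hn (sg n k)) : AdjRel f hn := by
  rcases Nat.lt_or_ge (i+2) k with h3 | h3
  · -- gap ≥ 3 : z = sg (i+1) commutes with sg k, braids with sg i
    refine ⟨i, by omega, ?_⟩
    have hz := ztrick f hn (sg_mem hk) (sg_mem (by omega)) (sg_mem (by omega))
      (commute_conj ((comm_sg (by omega : (i+1)+2 ≤ k)).symm))
      ((sg_braid (by omega : i + 1 < n - 1)).symm) heq.symm
    exact hz.symm
  · -- k = i + 2
    have hk2 : k = i + 2 := by omega
    subst hk2
    rcases Nat.lt_or_ge (i+3) (n-1) with h4 | h4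
    · -- use z = sg (i+3)
      refine ⟨i+2, by omega, ?_⟩
      have hz := ztrick f hn (sg_mem (by omega)) (sg_mem hk) (sg_mem (by omega))
        (commute_conj (comm_sg (by omega : i + 2 ≤ i + 3)))
        ((sg_braid (by omega : (i+2) + 1 < n - 1)).symm) heq
      exact hz.symm
    · -- use z = sg (i-1); here i ≥ 1 since n ≥ 5
      obtain ⟨i', rfl⟩ : ∃ i', i = i' + 1 := ⟨i - 1, by omega⟩
      refine ⟨i', by omega, ?_⟩
      have hz := ztrick f hn (sg_mem hk) (sg_mem (by omega)) (sg_mem (by omega))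
        (commute_conj ((comm_sg (by omega : i' + 2 ≤ i' + 3)).symm))
        (sg_braid (by omega : i' + 1 < n - 1)) heq.symm
    -- hz : FF (sg i') = FF (sg (i'+1))
      exact hz

/-- shared middle index: `a_{i,j} ~ a_{j,l}` with `i < j < l`. -/
lemma colA {i j l : ℕ} (hij : i < j) (hjl : j < l) (hln : l ≤ n - 1)
    (heq : FF f hn (band n i j) = FF f hn (band n j l)) : AdjRel f hn := by
  obtain ⟨j', rfl⟩ : ∃ j', j = j' + 1 := ⟨j - 1, by omega⟩
  have s1 : FF f hn (band n (j'+1) (j'+1+1)) = FF f hn (band n i (j'+1)) := by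
    refine shrinkR f hn (by omega) (by omega) hln (band_mem hij (by omega))
      (fun t ht1 ht2 => comm_band_gt hij (by omega)) heq.symm
  rw [band_base] at s1
  have s2 : FF f hn (band n j' (j'+1)) = FF f hn (sg n (j'+1)) := by
    refine shrinkL f hn (by omega) (by omega) (by omega) (sg_mem (by omega))
      (fun t ht1 ht2 => comm_sg (by omega)) s1.symm
  rw [band_base] at s2
  exact ⟨j', by omega, s2⟩

/-- shared left index: `a_{i,j} ~ a_{i,l}` with `i < j < l`. -/
lemma colB {i j l : ℕ} (hij : i < j) (hjl : j < l) (hln : l ≤ n - 1)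
    (heq : FF f hn (band n i j) = FF f hn (band n i l)) : AdjRel f hn := by
  have s1 : FF f hn (band n i (j+1)) = FF f hn (band n i j) := by
    refine shrinkR f hn (by omega) (by omega) hln (band_mem hij (by omega))
      (fun t ht1 ht2 => comm_band_gt hij (by omega)) heq.symm
  have s2 : FF f hn (band n i (i+1)) = FF f hn (band n i (j+1)) := by
    refine shrinkR f hn (by omega) (by omega) (by omega)
      (band_mem (by omega) (by omega))
      (fun t ht1 ht2 => comm_band_interior (by omega) (by omega) (by omega)) s1.symm
  rw [band_base] at s2
  have s3 : FF f hn (band n i (i+2)) = FF f hn (sg n i) := by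
    refine shrinkR f hn (by omega) (by omega) (by omega) (sg_mem (by omega))
      (fun t ht1 ht2 => (comm_sg (by omega)).symm) s2.symm
  -- conjugate both by sg i
  have s4 := mvP f hn (show i < n - 1 by omega)
    (band_mem (by omega) (by omega)) (sg_mem (by omega)) s3
  have e1 : sg n i * band n i (i+2) * (sg n i)⁻¹ = band n (i+1) (i+2) :=
    band_conj_left (by omega) (by omega)
  have e2 : sg n i * sg n i * (sg n i)⁻¹ = sg n i := by group
  rw [e1, e2, band_base] at s4
  exact ⟨i, by omega, s4.symm⟩

/-- shared right index: `a_{i,j} ~ a_{k,j}` with `i < k < j`. -/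
lemma colC {i k j : ℕ} (hik : i < k) (hkj : k < j) (hjn : j ≤ n - 1)
    (heq : FF f hn (band n i j) = FF f hn (band n k j)) : AdjRel f hn := by
  obtain ⟨k', rfl⟩ : ∃ k', k = k' + 1 := ⟨k - 1, by omega⟩
  have s1 : FF f hn (band n k' j) = FF f hn (band n (k'+1) j) := by
    refine shrinkL f hn (by omega) (by omega) hjn
      (band_mem (by omega) hjn)
      (fun t ht1 ht2 => comm_band_lt hkj (by omega)) heq
  have s2 : FF f hn (band n k' (k'+2)) = FF f hn (band n (k'+1) (k'+2)) :=
    shrinkR_pair f hn (by omega) (by omega) (by omega) hjn s1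
  rw [band_base] at s2
  have hb : band n k' (k'+2) = sg n (k'+1) * band n k' (k'+1) * (sg n (k'+1))⁻¹ :=
    band_succ (by omega)
  rw [hb, band_base] at s2
  -- conjugate both by (sg (k'+1))⁻¹
  have s3 := mvN f hn (show k' + 1 < n - 1 by omega)
    (by rw [← band_base (k'), ← hb]; exact band_mem (by omega) (by omega))
    (sg_mem (by omega)) s2
  have e1 : (sg n (k'+1))⁻¹ * (sg n (k'+1) * sg n k' * (sg n (k'+1))⁻¹) * sg n (k'+1)
      = sg n k' := by group
  have e2 : (sg n (k'+1))⁻¹ * sg n (k'+1) * sg n (k'+1) = sg n (k'+1) := by group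
  rw [e1, e2] at s3
  exact ⟨k', by omega, s3⟩

/-- disjoint, sequential: `a_{i,j} ~ a_{k,l}` with `i < j < k < l`. -/
lemma colD {i j k l : ℕ} (hij : i < j) (hjk : j < k) (hkl : k < l) (hln : l ≤ n - 1)
    (heq : FF f hn (band n i j) = FF f hn (band n k l)) : AdjRel f hn := by
  have s1 : FF f hn (band n k (k+1)) = FF f hn (band n i j) := by
    refine shrinkR f hn (by omega) (by omega) hln (band_mem hij (by omega))
      (fun t ht1 ht2 => comm_band_gt hij (by omega)) heq.symm
  rw [band_base] at s1
  have s2 : FF f hn (band n i (i+1)) = FF f hn (sg n k) := by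
    refine shrinkR f hn (by omega) (by omega) (by omega) (sg_mem (by omega))
      (fun t ht1 ht2 => comm_sg (by omega)) s1.symm
  rw [band_base] at s2
  exact gap_endgame f hn (by omega) (by omega) s2

end Cases

end Stmt10
namespace Stmt10

open Quandles

variable {n : ℕ}

section Cases2

variable {Q : Type*} [Quandle Q]
  (f : DehnQuandle (BraidGroup n)
      (Set.range (PresentedGroup.of : Fin (n - 1) → BraidGroup n)) →◃ Q)
  (hn : 5 ≤ n)

/-- interleaved: `a_{i,j} ~ a_{k,l}` with `i < k < j < l`. -/
lemma colE {i k j l : ℕ} (hik : i < k) (hkj : k < j) (hjl : j < l) (hln : l ≤ n - 1)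
    (heq : FF f hn (band n i j) = FF f hn (band n k l)) : AdjRel f hn := by
  obtain ⟨k', rfl⟩ : ∃ k', k = k' + 1 := ⟨k - 1, by omega⟩
  -- step 1 : shrink second band's right end down to j+1
  have s1 : FF f hn (band n (k'+1) (j+1)) = FF f hn (band n i j) := by
    refine shrinkR f hn (X := band n i j) (by omega) (by omega) hln
      (band_mem (by omega) (by omega))
      (fun t ht1 ht2 => comm_band_gt (by omega : i < j) (by omega)) heq.symm
  -- step 2 : move first band's left end up to k'
  have s2 : FF f hn (band n k' j) = FF f hn (band n (k'+1) (j+1)) := by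
    refine shrinkL f hn (X := band n (k'+1) (j+1)) (by omega) (by omega) (by omega)
      (band_mem (by omega) (by omega))
      (fun t ht1 ht2 => comm_band_lt (by omega) (by omega)) s1.symm
  -- step 3 : shrink first band's right end down to k'+2
  have s3 : FF f hn (band n k' (k'+2)) = FF f hn (band n (k'+1) (j+1)) := by
    refine shrinkR f hn (X := band n (k'+1) (j+1)) (by omega) (by omega) (by omega)
      (band_mem (by omega) (by omega))
      (fun t ht1 ht2 => comm_band_interior (by omega) (by omega) (by omega)) s2
  -- step 4 : shrink second band's right end down to k'+3
  have s4 : FF f hn (band n (k'+1) (k'+3)) = FF f hn (band n k' (k'+2)) := by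
    refine shrinkR f hn (X := band n k' (k'+2)) (by omega) (by omega) (by omega)
      (band_mem (by omega) (by omega))
      (fun t ht1 ht2 => comm_band_gt (by omega) (by omega)) s3.symm
  -- expansions
  set a := sg n k' with ha
  set b := sg n (k'+1) with hb
  set c := sg n (k'+2) with hc
  have eA : band n k' (k'+2) = b * a * b⁻¹ := by
    have h := band_succ (n := n) (i := k') (j := k'+1) (by omega)
    rwa [band_base] at h
  have eB : band n (k'+1) (k'+3) = c * b * c⁻¹ := by
    have h := band_succ (n := n) (i := k'+1) (j := k'+2) (by omega)
    rwa [band_base] at h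
  rw [eA, eB] at s4
  -- step 5 : conjugate both by b⁻¹
  have s5 := mvN f hn (show k' + 1 < n - 1 by omega)
    (conj_mem c (sg_mem (by omega))) (conj_mem b (sg_mem (by omega))) s4
  have hbrk : b * c * b = c * b * c := sg_braid (by omega : (k'+1) + 1 < n - 1)
  have e1 : b⁻¹ * (b * a * b⁻¹) * b = a := by group
  have e2 : b⁻¹ * (c * b * c⁻¹) * b = (b⁻¹ * b⁻¹) * c * (b⁻¹ * b⁻¹)⁻¹ := by
    have h5 : c * b * c⁻¹ = b⁻¹ * (b * c * b) * c⁻¹ := by group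
    rw [hbrk] at h5
    rw [h5]
    simp [mul_inv_rev, inv_inv, mul_assoc]
  rw [e1, e2] at s5
  -- s5 : FF ((b⁻¹*b⁻¹) * c * (b⁻¹*b⁻¹)⁻¹) = FF a
  have hvmem : (b⁻¹ * b⁻¹) * c * (b⁻¹ * b⁻¹)⁻¹ ∈ DS n :=
    conj_mem _ (sg_mem (by omega))
  rcases Nat.lt_or_ge (k'+3) (n-1) with h4 | h4
  · -- z = sg (k'+3)
    set d := sg n (k'+3) with hd
    have hzb : Commute d b := (comm_sg (by omega : (k'+1) + 2 ≤ k' + 3)).symm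
    have hg : (b⁻¹ * b⁻¹) * d * (b⁻¹ * b⁻¹)⁻¹ = d :=
      commute_conj ((hzb.inv_right.mul_right hzb.inv_right).symm)
    have hbr2 : d * c * d = c * d * c :=
      (sg_braid (by omega : (k'+2) + 1 < n - 1)).symm
    have hz := ztrick f hn (sg_mem (by omega)) hvmem (sg_mem (by omega))
      (commute_conj (comm_sg (by omega : k' + 2 ≤ k' + 3)))
      (conj_braid hbr2 hg) s5.symm
    -- hz : FF d = FF v₀ ; and s5 : FF v₀ = FF a
    have hgap : FF f hn (sg n k') = FF f hn (sg n (k'+3)) := (hz.trans s5).symm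
    exact gap_endgame f hn (by omega) (by omega) hgap
  · -- z = sg (k'-1) ; here k' ≥ 1 since n ≥ 5
    obtain ⟨m, rfl⟩ : ∃ m, k' = m + 1 := ⟨k' - 1, by omega⟩
    have hcv : Commute (sg n m) ((b⁻¹ * b⁻¹) * c * (b⁻¹ * b⁻¹)⁻¹) := by
      have h1 : Commute (sg n m) b := comm_sg (by omega)
      have h2 : Commute (sg n m) c := comm_sg (by omega)
      exact (((h1.inv_right.mul_right h1.inv_right).mul_right h2)).mul_right
        (h1.inv_right.mul_right h1.inv_right).inv_right
    have hz := ztrick f hn hvmem (sg_mem (by omega)) (sg_mem (by omega))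
      (commute_conj hcv.symm)
      (sg_braid (by omega : m + 1 < n - 1)) s5
    exact ⟨m, by omega, hz⟩

/-- nested: `a_{i,j} ~ a_{k,l}` with `i < k < l < j`. -/
lemma colF {i k l j : ℕ} (hik : i < k) (hkl : k < l) (hlj : l < j) (hjn : j ≤ n - 1)
    (heq : FF f hn (band n i j) = FF f hn (band n k l)) : AdjRel f hn := by
  obtain ⟨k', rfl⟩ : ∃ k', k = k' + 1 := ⟨k - 1, by omega⟩
  have s1 : FF f hn (band n (k'+1) (k'+2)) = FF f hn (band n i j) := by
    refine shrinkR f hn (X := band n i j) (by omega) (by omega) (by omega)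
      (band_mem (by omega) hjn)
      (fun t ht1 ht2 => comm_band_interior (by omega) (by omega) (by omega)) heq.symm
  rw [band_base] at s1
  have s2 : FF f hn (band n k' j) = FF f hn (sg n (k'+1)) := by
    refine shrinkL f hn (X := sg n (k'+1)) (by omega) (by omega) hjn
      (sg_mem (by omega))
      (fun t ht1 ht2 => comm_sg (by omega)) s1.symm
  have s3 : FF f hn (band n k' (k'+3)) = FF f hn (sg n (k'+1)) := by
    refine shrinkR f hn (X := sg n (k'+1)) (by omega) (by omega) hjn
      (sg_mem (by omega))
      (fun t ht1 ht2 => (comm_sg (by omega : (k'+1) + 2 ≤ t)).symm) s2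
  set a := sg n k' with ha
  set b := sg n (k'+1) with hb
  set c := sg n (k'+2) with hc
  have eA : band n k' (k'+3) = c * (b * a * b⁻¹) * c⁻¹ := by
    have h1 := band_succ (n := n) (i := k') (j := k'+2) (by omega)
    have h2 := band_succ (n := n) (i := k') (j := k'+1) (by omega)
    rw [h2, band_base] at h1
    exact h1
  rw [eA] at s3
  have hbrk : b * c * b = c * b * c := sg_braid (by omega : (k'+1) + 1 < n - 1)
  have s4 := mvN f hn (show k' + 2 < n - 1 by omega)
    (conj_mem c (conj_mem b (sg_mem (by omega)))) (sg_mem (by omega)) s3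
  have e1 : c⁻¹ * (c * (b * a * b⁻¹) * c⁻¹) * c = b * a * b⁻¹ := by group
  have e2 : c⁻¹ * b * c = b * c * b⁻¹ := by
    have h5 : c⁻¹ * b * c = c⁻¹ * b * c * (b * b⁻¹) := by group
    have h6 : c⁻¹ * (b * c * b) * b⁻¹ = b * c * b⁻¹ := by
      rw [hbrk]; group
    calc c⁻¹ * b * c = c⁻¹ * (b * c * b) * b⁻¹ := by group
      _ = b * c * b⁻¹ := h6
  rw [e1, e2] at s4
  -- s4 : FF (b * a * b⁻¹) = FF (b * c * b⁻¹)
  have s5 := mvN f hn (show k' + 1 < n - 1 by omega)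
    (conj_mem b (sg_mem (by omega))) (conj_mem b (sg_mem (by omega))) s4
  have e3 : b⁻¹ * (b * a * b⁻¹) * b = a := by group
  have e4 : b⁻¹ * (b * c * b⁻¹) * b = c := by group
  rw [e3, e4] at s5
  exact gap_endgame f hn (by omega) (by omega) s5

end Cases2

end Stmt10
namespace Stmt10

open Quandles

variable {n : ℕ}

section Master

variable {Q : Type*} [Quandle Q]
  (f : DehnQuandle (BraidGroup n)
      (Set.range (PresentedGroup.of : Fin (n - 1) → BraidGroup n)) →◃ Q)
  (hn : 5 ≤ n)

lemma collision0 {i j k l : ℕ} (hik : i ≤ k) (hij : i < j) (hjn : j ≤ n - 1)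
    (hkl : k < l) (hln : l ≤ n - 1) (hne : (i, j) ≠ (k, l))
    (heq : FF f hn (band n i j) = FF f hn (band n k l)) : AdjRel f hn := by
  rcases Nat.lt_or_ge i k with h | h
  · rcases Nat.lt_trichotomy k j with h2 | h2 | h2
    · rcases Nat.lt_trichotomy j l with h3 | h3 | h3
      · exact colE f hn h h2 h3 hln heq
      · subst h3; exact colC f hn h h2 hjn heq
      · exact colF f hn h hkl h3 hjn heq
    · subst h2; exact colA f hn hij hkl hln heq
    · exact colD f hn hij h2 hkl hln heq
  · have h' : i = k := by omega
    subst h'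
    rcases Nat.lt_trichotomy j l with h3 | h3 | h3
    · exact colB f hn hij h3 hln heq
    · exact absurd (by rw [h3]) hne
    · exact colB f hn hkl h3 hjn heq.symm

lemma collision {i j k l : ℕ} (hij : i < j) (hjn : j ≤ n - 1)
    (hkl : k < l) (hln : l ≤ n - 1) (hne : (i, j) ≠ (k, l))
    (heq : FF f hn (band n i j) = FF f hn (band n k l)) : AdjRel f hn := by
  rcases le_or_gt i k with h | h
  · exact collision0 f hn h hij hjn hkl hln hne heq
  · exact collision0 f hn (by omega) hkl hln hij hjn (by simpa using (Ne.symm hne)) heq.symm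

lemma step_up {t : ℕ} (h2 : t + 2 < n - 1)
    (h : FF f hn (sg n t) = FF f hn (sg n (t+1))) :
    FF f hn (sg n (t+1)) = FF f hn (sg n (t+2)) := by
  have hz := ztrick f hn (sg_mem (by omega)) (sg_mem (by omega)) (sg_mem (by omega))
    (commute_conj (comm_sg (by omega : t + 2 ≤ t + 2)))
    ((sg_braid (by omega : (t+1) + 1 < n - 1)).symm) h
  -- hz : FF (sg (t+2)) = FF (sg (t+1))
  exact hz.symm

lemma step_down {t : ℕ} (h2 : t + 2 < n - 1)
    (h : FF f hn (sg n (t+1)) = FF f hn (sg n (t+2))) :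
    FF f hn (sg n t) = FF f hn (sg n (t+1)) := by
  exact ztrick f hn (sg_mem (by omega)) (sg_mem (by omega)) (sg_mem (by omega))
    (commute_conj ((comm_sg (by omega : t + 2 ≤ t + 2)).symm))
    (sg_braid (by omega : t + 1 < n - 1)) h.symm

lemma all_adj (h : AdjRel f hn) :
    ∀ t, t + 1 < n - 1 → FF f hn (sg n t) = FF f hn (sg n (t+1)) := by
  obtain ⟨t0, ht0, h0⟩ := h
  have down : ∀ d t, t + d = t0 → FF f hn (sg n t) = FF f hn (sg n (t+1)) := by
    intro d
    induction d with
    | zero => intro t ht; have : t = t0 := by omega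
              subst this; exact h0
    | succ d ih =>
      intro t ht
      have h1 := ih (t+1) (by omega)
      exact step_down f hn (by omega) h1
  intro t ht
  rcases le_or_gt t t0 with hle | hgt
  · exact down (t0 - t) t (by omega)
  · clear down
    induction t, hgt using Nat.le_induction with
    | base => exact step_up f hn (by omega) h0
    | succ t h1t ih => exact step_up f hn (by omega) (ih (by omega))

lemma sg_fin (x : Fin (n-1)) : sg n ↑x = PresentedGroup.of x := by
  simp [sg, dif_pos x.isLt]

lemma of_mem (x : Fin (n-1)) : (PresentedGroup.of x : BraidGroup n) ∈ DS n := by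
  rw [← sg_fin]; exact sg_mem x.isLt

lemma fconst (hall : ∀ t, t + 1 < n - 1 → FF f hn (sg n t) = FF f hn (sg n (t+1)))
    {x : BraidGroup n} (hx : x ∈ DS n) : FF f hn x = FF f hn (sg n 0) := by
  have hall0 : ∀ t, t < n - 1 → FF f hn (sg n t) = FF f hn (sg n 0) := by
    intro t
    induction t with
    | zero => intro _; rfl
    | succ t ih => intro ht; exact (hall t ht).symm.trans (ih (by omega))
  have key : ∀ (w : FreeGroup (Fin (n-1))) (y : BraidGroup n), y ∈ DS n →
      FF f hn y = FF f hn (sg n 0) →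
      FF f hn (PresentedGroup.mk (braidRels n) w * y * (PresentedGroup.mk (braidRels n) w)⁻¹)
        = FF f hn (sg n 0) := by
    intro w
    induction w using FreeGroup.induction_on with
    | C1 => intro y hy h; simpa using h
    | of x =>
      intro y hy h
      have hox : (PresentedGroup.mk (braidRels n) (FreeGroup.of x) : BraidGroup n)
          = PresentedGroup.of x := rfl
      rw [hox, FactP f hn (of_mem x) hy, h, ← sg_fin, hall0 ↑x x.isLt, Quandle.fix]
    | inv_of x _ =>
      intro y hy h
      have hox : (PresentedGroup.mk (braidRels n) (FreeGroup.of x) : BraidGroup n)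
          = PresentedGroup.of x := rfl
      rw [map_inv, hox, inv_inv, FactN f hn (of_mem x) hy, h, ← sg_fin,
        hall0 ↑x x.isLt, Quandle.fix_inv]
    | mul w1 w2 ih1 ih2 =>
      intro y hy h
      rw [map_mul]
      set g1 := PresentedGroup.mk (braidRels n) w1
      set g2 := PresentedGroup.mk (braidRels n) w2
      have e : g1 * g2 * y * (g1 * g2)⁻¹ = g1 * (g2 * y * g2⁻¹) * g1⁻¹ := by group
      rw [e]
      exact ih1 _ (conj_mem g2 hy) (ih2 y hy h)
  obtain ⟨s, ⟨m, rfl⟩, hc⟩ := hx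
  obtain ⟨g, hg⟩ := isConj_iff.mp hc
  obtain ⟨w, rfl⟩ := PresentedGroup.mk_surjective (braidRels n) g
  rw [← hg]
  exact key w _ (of_mem m) (by rw [← sg_fin]; exact hall0 ↑m m.isLt)

end Master

end Stmt10
namespace Stmt10

variable {n : ℕ}

lemma two_min_max {s : Finset (Fin n)} (h : s.card = 2) (hne : s.Nonempty) :
    s.min' hne < s.max' hne ∧ s = {s.min' hne, s.max' hne} := by
  have hmm : s.min' hne ≤ s.max' hne := Finset.min'_le _ _ (Finset.max'_mem _ _)
  have hne2 : s.min' hne ≠ s.max' hne := by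
    intro heq
    have hsub : s ⊆ {s.min' hne} := by
      intro x hx
      have h1 := Finset.min'_le _ _ hx
      have h2 := Finset.le_max' _ _ hx
      rw [← heq] at h2
      simp [le_antisymm h2 h1]
    have := Finset.card_le_card hsub
    simp at this
    omega
  constructor
  · exact lt_of_le_of_ne hmm hne2
  · have hsub : ({s.min' hne, s.max' hne} : Finset (Fin n)) ⊆ s := by
      rw [Finset.insert_subset_iff]
      exact ⟨Finset.min'_mem _ _, Finset.singleton_subset_iff.mpr (Finset.max'_mem _ _)⟩
    have hcard : ({s.min' hne, s.max' hne} : Finset (Fin n)).card = 2 := by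
      rw [Finset.card_insert_of_notMem (by simpa using hne2), Finset.card_singleton]
    exact (Finset.eq_of_subset_of_card_le hsub (by omega)).symm

end Stmt10

/-- for `n ≥ 5`, any quandle quotient of the Dehn quandle `D(S^{Bₙ})` of
the braid group with at least two elements has at least `n(n-1)/2` elements. -/
theorem stmt_10 (n : ℕ) (hn : 5 ≤ n) {Q : Type*} [Quandle Q]
    (f : DehnQuandle (BraidGroup n)
        (Set.range (PresentedGroup.of : Fin (n - 1) → BraidGroup n)) →◃ Q)
    (hf : Function.Surjective f) (hQ : ∃ a b : Q, a ≠ b) :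
    ((n * (n - 1) / 2 : ℕ) : Cardinal) ≤ Cardinal.mk Q := by
  classical
  obtain ⟨a0, b0, hab⟩ := hQ
  -- if two distinct bands have the same image, everything collapses
  have key : ∀ i j k l : ℕ, i < j → j ≤ n - 1 → k < l → l ≤ n - 1 →
      Stmt10.FF f hn (Stmt10.band n i j) = Stmt10.FF f hn (Stmt10.band n k l) →
      (i, j) = (k, l) := by
    intro i j k l hij hjn hkl hln heq
    by_contra hne
    have hadj := Stmt10.collision f hn hij hjn hkl hln hne heq
    have hall := Stmt10.all_adj f hn hadj
    obtain ⟨⟨va, hva⟩, rfl⟩ := hf a0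
    obtain ⟨⟨vb, hvb⟩, rfl⟩ := hf b0
    apply hab
    calc f ⟨va, hva⟩ = Stmt10.FF f hn va := (Stmt10.FF_eq f hn hva).symm
      _ = Stmt10.FF f hn (Stmt10.sg n 0) := Stmt10.fconst f hn hall hva
      _ = Stmt10.FF f hn vb := (Stmt10.fconst f hn hall hvb).symm
      _ = f ⟨vb, hvb⟩ := Stmt10.FF_eq f hn hvb
  -- build an injection from 2-element subsets of `Fin n` into `Q`
  have hQne : ∀ s : {s : Finset (Fin n) // s.card = 2}, s.1.Nonempty := fun s =>
    Finset.card_pos.mp (by rw [s.2]; omega)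
  let φ : {s : Finset (Fin n) // s.card = 2} → Q := fun s =>
    Stmt10.FF f hn (Stmt10.band n (s.1.min' (hQne s)).val (s.1.max' (hQne s)).val)
  have hφ : Function.Injective φ := by
    intro s1 s2 hφeq
    obtain ⟨hlt1, hrep1⟩ := Stmt10.two_min_max s1.2 (hQne s1)
    obtain ⟨hlt2, hrep2⟩ := Stmt10.two_min_max s2.2 (hQne s2)
    have h1n : (s1.1.max' (hQne s1)).val ≤ n - 1 := by
      have := (s1.1.max' (hQne s1)).isLt; omega
    have h2n : (s2.1.max' (hQne s2)).val ≤ n - 1 := by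
      have := (s2.1.max' (hQne s2)).isLt; omega
    have hpair := key _ _ _ _ (by exact_mod_cast hlt1) h1n (by exact_mod_cast hlt2) h2n hφeq
    have e1 : s1.1.min' (hQne s1) = s2.1.min' (hQne s2) :=
      Fin.val_injective (by simpa using congrArg Prod.fst hpair)
    have e2 : s1.1.max' (hQne s1) = s2.1.max' (hQne s2) :=
      Fin.val_injective (by simpa using congrArg Prod.snd hpair)
    apply Subtype.ext
    rw [hrep1, hrep2, e1, e2]
  have hcard : Fintype.card {s : Finset (Fin n) // s.card = 2} = n * (n - 1) / 2 := by
    rw [Fintype.card_finset_len, Fintype.card_fin, Nat.choose_two_right]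
  have hle := Cardinal.lift_mk_le'.mpr ⟨⟨φ, hφ⟩⟩
  rw [Cardinal.mk_fintype, hcard] at hle
  simpa using hle
end

section
/- Let p be a prime and g ≥ 1. An element A ∈ Sp(2g, Z_p) commutes with T = I_{2g} − E_{1,2} if and only if the first column of A equals (a, 0, 0, …, 0)ᵀ and the second row of A equals (0, a, 0, 0, …, 0) for some a ∈ Z_p with a = ±1 (mod p). -/
/-- The standard symplectic form matrix `J`: block-diagonal with `g` diagonal blocks
`[[0, 1], [-1, 0]]` (using 0-indexed rows and columns of `Fin (2 * g)`). -/
def Jmat (g p : ℕ) : Matrix (Fin (2 * g)) (Fin (2 * g)) (ZMod p) := fun i j =>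
  if (i : ℕ) % 2 = 0 ∧ (j : ℕ) = (i : ℕ) + 1 then 1
  else if (j : ℕ) % 2 = 0 ∧ (i : ℕ) = (j : ℕ) + 1 then -1
  else 0

/-- The matrix `T = I_{2g} - E_{1,2}`, where `E_{1,2}` has a single nonzero entry `1`
in the (1,2) position (0-indexed: position `(0,1)`). -/
def Tmat (g p : ℕ) : Matrix (Fin (2 * g)) (Fin (2 * g)) (ZMod p) := fun i j =>
  if i = j then 1
  else if (i : ℕ) = 0 ∧ (j : ℕ) = 1 then -1
  else 0

lemma Tmat_eq (g p : ℕ) (hg : 1 ≤ g) :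
    Tmat g p = 1 - Matrix.single (⟨0, by linarith⟩ : Fin (2 * g)) ⟨1, by linarith⟩ 1 := by
  ext i j
  simp only [Tmat, Matrix.sub_apply, Matrix.one_apply, Matrix.single, Matrix.of_apply]
  by_cases h : i = j
  · subst h
    have : ¬((⟨0, by omega⟩ : Fin (2 * g)) = i ∧ (⟨1, by omega⟩ : Fin (2 * g)) = i) := by
      rintro ⟨h1, h2⟩
      rw [← h1] at h2
      exact absurd (congrArg Fin.val h2) (by simp)
    simp [this]
  · simp only [if_neg h]
    by_cases h2 : (i : ℕ) = 0 ∧ (j : ℕ) = 1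
    · have hi : (⟨0, by omega⟩ : Fin (2 * g)) = i := Fin.ext h2.1.symm
      have hj : (⟨1, by omega⟩ : Fin (2 * g)) = j := Fin.ext h2.2.symm
      simp [h2, hi, hj]
    · have : ¬((⟨0, by omega⟩ : Fin (2 * g)) = i ∧ (⟨1, by omega⟩ : Fin (2 * g)) = j) := by
        rintro ⟨h1, h2'⟩
        exact h2 ⟨(congrArg Fin.val h1).symm, (congrArg Fin.val h2').symm⟩
      simp [h2, this]

/-- a symplectic matrix `A ∈ Sp(2g, ℤ_p)` commutes with `T = I - E_{1,2}`
iff its first column is `(a, 0, …, 0)ᵀ` and its second row is `(0, a, 0, …, 0)` with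
`a = ±1`. -/
theorem stmt_12 (p : ℕ) (hp : p.Prime) (g : ℕ) (hg : 1 ≤ g)
    (A : Matrix (Fin (2 * g)) (Fin (2 * g)) (ZMod p))
    (hA : A.transpose * Jmat g p * A = Jmat g p) :
    A * Tmat g p = Tmat g p * A ↔
      ∃ a : ZMod p, (a = 1 ∨ a = -1) ∧
        (∀ i : Fin (2 * g), A i ⟨0, by omega⟩ = if (i : ℕ) = 0 then a else 0) ∧
        (∀ j : Fin (2 * g), A ⟨1, by omega⟩ j = if (j : ℕ) = 1 then a else 0) := by
  haveI : Fact p.Prime := ⟨hp⟩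
  set i0 : Fin (2 * g) := ⟨0, by omega⟩ with hi0
  set i1 : Fin (2 * g) := ⟨1, by omega⟩ with hi1
  have hne : i0 ≠ i1 := by
    intro h; exact absurd (congrArg Fin.val h) (by simp [hi0, hi1])
  set E : Matrix (Fin (2 * g)) (Fin (2 * g)) (ZMod p) := Matrix.single i0 i1 1 with hE
  have hT : Tmat g p = 1 - E := Tmat_eq g p hg
  have hcommE : A * Tmat g p = Tmat g p * A ↔ A * E = E * A := by
    rw [hT, Matrix.mul_sub, Matrix.sub_mul, Matrix.mul_one, Matrix.one_mul]
    constructor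
    · intro h; exact sub_right_injective h
    · intro h; rw [h]
  rw [hcommE]
  constructor
  · intro hcomm
    have hc : ∀ i j, (A * E) i j = (E * A) i j := fun i j =>
      congrFun (congrFun hcomm i) j
    have hcol : ∀ i, i ≠ i0 → A i i0 = 0 := by
      intro i hi
      have := hc i i1
      rw [Matrix.mul_single_apply_same, Matrix.single_mul_apply_of_ne _ _ _ _ _ hi] at this
      simpa using this
    have hrow : ∀ j, j ≠ i1 → A i1 j = 0 := by
      intro j hj
      have := hc i0 j
      rw [Matrix.mul_single_apply_of_ne _ _ _ _ _ hj, Matrix.single_mul_apply_same] at this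
      simpa using this.symm
    have hdiag : A i0 i0 = A i1 i1 := by
      have := hc i0 i1
      rw [Matrix.mul_single_apply_same, Matrix.single_mul_apply_same] at this
      simpa using this
    have hkey : (A.transpose * Jmat g p * A) i0 i1 = A i0 i0 * A i1 i1 := by
      rw [Matrix.mul_assoc, Matrix.mul_apply]
      rw [Finset.sum_eq_single i0]
      · rw [Matrix.transpose_apply, Matrix.mul_apply, Finset.sum_eq_single i1]
        · have : Jmat g p i0 i1 = 1 := by simp [Jmat, hi0, hi1]
          rw [this, one_mul]
        · intro l _ hl
          have hl' : (l : ℕ) ≠ 1 := fun h => hl (Fin.ext h)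
          have : Jmat g p i0 l = 0 := by
            simp only [Jmat, hi0]
            simp [hl']
          rw [this, zero_mul]
        · intro h; exact absurd (Finset.mem_univ i1) h
      · intro k _ hk
        rw [Matrix.transpose_apply, hcol k hk, zero_mul]
      · intro h; exact absurd (Finset.mem_univ i0) h
    have hJ01 : Jmat g p i0 i1 = 1 := by simp [Jmat, hi0, hi1]
    have ha2 : A i0 i0 * A i0 i0 = 1 := by
      have := congrFun (congrFun hA i0) i1
      rw [hkey, hJ01, ← hdiag] at this
      exact this
    refine ⟨A i0 i0, mul_self_eq_one_iff.mp ha2, ?_, ?_⟩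
    · intro i
      by_cases h : (i : ℕ) = 0
      · have : i = i0 := Fin.ext h
        rw [this, if_pos rfl]
      · rw [if_neg h]
        exact hcol i (fun he => h (congrArg Fin.val he))
    · intro j
      by_cases h : (j : ℕ) = 1
      · have : j = i1 := Fin.ext h
        rw [this, if_pos rfl, ← hdiag]
      · rw [if_neg h]
        exact hrow j (fun he => h (congrArg Fin.val he))
  · rintro ⟨a, _, hcol, hrow⟩
    ext i j
    by_cases hj : j = i1
    · subst hj
      rw [Matrix.mul_single_apply_same]
      by_cases hi : i = i0
      · subst hi
        rw [Matrix.single_mul_apply_same]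
        have h1 := hcol i0
        have h2 := hrow i1
        simp only [hi0, hi1] at h1 h2 ⊢
        rw [h1, h2]
        simp
      · rw [Matrix.single_mul_apply_of_ne _ _ _ _ _ hi]
        have h1 := hcol i
        have : (i : ℕ) ≠ 0 := fun h => hi (Fin.ext h)
        rw [if_neg this] at h1
        simp [h1]
    · rw [Matrix.mul_single_apply_of_ne _ _ _ _ _ hj]
      by_cases hi : i = i0
      · subst hi
        rw [Matrix.single_mul_apply_same]
        have h2 := hrow j
        have : (j : ℕ) ≠ 1 := fun h => hj (Fin.ext h)
        rw [if_neg this] at h2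
        simp [h2]
      · rw [Matrix.single_mul_apply_of_ne _ _ _ _ _ hi]
end

section
/- Let t = [[1,1],[0,1]] ∈ SL(2, Z) and let Q = {g t g⁻¹ : g ∈ SL(2, Z)} be the set of conjugates of t, regarded as a quandle under x*y = y x y⁻¹. Let π : Q → Q_2 be a universal involutory (2-)quandle quotient. Then Q_2 is isomorphic to the dihedral quandle of order 3, i.e., the set Z/3Z with operation i*j = 2j − i. -/
open Quandles

universe u v

/-- `π : Q → Qn` is a universal `n`-quandle quotient. -/
def IsUniversalNQuandleQuotient {Q : Type u} {Qn : Type v} [Quandle Q] [Quandle Qn]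
    (n : ℕ) (π : Q →◃ Qn) : Prop :=
  Function.Surjective π ∧ IsNQuandle Qn n ∧
    ∀ (Y : Type max u v) [Quandle Y], IsNQuandle Y n →
      ∀ f : Q →◃ Y, ∃! g : Qn →◃ Y, ∀ x, g (π x) = f x


/-- The matrix `t = [[1,1],[0,1]]` in `SL(2, ℤ)`; its conjugacy class is the Dehn quandle
`D₁ⁿˢ` of the torus (the knot quandle of the trefoil). -/
def tSL2Z : Matrix.SpecialLinearGroup (Fin 2) ℤ :=
  ⟨!![1, 1; 0, 1], by simp [Matrix.det_fin_two_of]⟩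


/-! ### Auxiliary material -/

namespace Stmt15Aux

open Matrix

abbrev SL2Z := Matrix.SpecialLinearGroup (Fin 2) ℤ
abbrev SL2F2 := Matrix.SpecialLinearGroup (Fin 2) (ZMod 2)
abbrev Q := DehnQuandle SL2Z {tSL2Z}

def bSL2Z : SL2Z := ⟨!![1, 0; -1, 1], by simp [Matrix.det_fin_two_of]⟩
def wS : SL2Z := tSL2Z * bSL2Z * tSL2Z

lemma tSL2Z_eq_T : tSL2Z = ModularGroup.T := Subtype.ext rfl

lemma coe_t_zpow (m : ℤ) : (tSL2Z ^ m).1 = !![1, m; 0, 1] := by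
  rw [tSL2Z_eq_T]; exact ModularGroup.coe_T_zpow m

lemma coe_w : (wS).1 = !![0,1;-1,0] := by
  show tSL2Z.1 * bSL2Z.1 * tSL2Z.1 = _
  simp [tSL2Z, bSL2Z]

lemma mem_closure_ab (g : SL2Z) : g ∈ Subgroup.closure ({tSL2Z, bSL2Z} : Set SL2Z) := by
  set K := Subgroup.closure ({tSL2Z, bSL2Z} : Set SL2Z) with hK
  have hta : tSL2Z ∈ K := Subgroup.subset_closure (by simp)
  have htb : bSL2Z ∈ K := Subgroup.subset_closure (by simp)
  have hw : wS ∈ K := mul_mem (mul_mem hta htb) hta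
  generalize hn : (g.1 1 0).natAbs = n
  induction n using Nat.strong_induction_on generalizing g with
  | _ n ih =>
  rcases eq_or_ne (g.1 1 0) 0 with h0 | h0
  · have hdet := g.2
    rw [Matrix.det_fin_two, h0, mul_zero, sub_zero] at hdet
    rcases Int.eq_one_or_neg_one_of_mul_eq_one' hdet with ⟨h1, h2⟩ | ⟨h1, h2⟩
    · have : g = tSL2Z ^ (g.1 0 1) := by
        apply Subtype.ext
        rw [coe_t_zpow]
        ext i j
        fin_cases i <;> fin_cases j <;> simp [h0, h1, h2]
      rw [this]; exact zpow_mem hta _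
    · have : g = wS * wS * tSL2Z ^ (-(g.1 0 1)) := by
        apply Subtype.ext
        show _ = wS.1 * wS.1 * (tSL2Z ^ (-(g.1 0 1))).1
        rw [coe_t_zpow, coe_w]
        ext i j
        fin_cases i <;> fin_cases j <;>
          simp [Matrix.mul_apply, Fin.sum_univ_two, h0, h1, h2]
      rw [this]
      exact mul_mem (mul_mem hw hw) (zpow_mem hta _)
  · set p := g.1 0 0 with hp
    set q := g.1 1 0 with hq
    set m := p / q with hm
    set g' := wS * (tSL2Z ^ (-m) * g) with hg'
    have hent : g'.1 1 0 = -(p % q) := by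
      have h : g'.1 = wS.1 * ((tSL2Z ^ (-m)).1 * g.1) := rfl
      rw [h, coe_w, coe_t_zpow]
      simp [Matrix.mul_apply, Fin.sum_univ_two, Matrix.vecMul, dotProduct,
        Int.emod_def]
      ring
    have hlt : (g'.1 1 0).natAbs < n := by
      rw [hent, Int.natAbs_neg]
      have h1 : 0 ≤ p % q := Int.emod_nonneg p h0
      have h2 : p % q < |q| := Int.emod_lt_abs p h0
      rw [Int.abs_eq_natAbs] at h2
      omega
    have hg'K : g' ∈ K := ih _ hlt g' rfl
    have hgeq : g = tSL2Z ^ m * (wS⁻¹ * g') := by rw [hg']; group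
    rw [hgeq]
    exact mul_mem (zpow_mem hta m) (mul_mem (inv_mem hw) hg'K)

/-! mod-2 reduction and the coloring map -/

instance : DecidableEq SL2F2 := fun a b =>
  decidable_of_iff (a.1 = b.1) Subtype.ext_iff.symm

def ta : SL2F2 := ⟨!![1,1;0,1], by decide⟩
def tb : SL2F2 := ⟨!![1,0;1,1], by decide⟩

def ρ : SL2Z →* SL2F2 := Matrix.SpecialLinearGroup.map (Int.castRingHom (ZMod 2))

lemma ρ_t : ρ tSL2Z = ta := by
  apply Subtype.ext
  show (Int.castRingHom (ZMod 2)).mapMatrix tSL2Z.1 = ta.1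
  ext i j
  fin_cases i <;> fin_cases j <;> simp [tSL2Z, ta]

lemma ρ_b : ρ bSL2Z = tb := by
  apply Subtype.ext
  show (Int.castRingHom (ZMod 2)).mapMatrix bSL2Z.1 = tb.1
  ext i j
  fin_cases i <;> fin_cases j <;> simp [bSL2Z, tb] <;> decide

def cmap (m : SL2F2) : Quandle.Dihedral 3 :=
  if m = ta then (0 : ZMod 3) else if m = tb then (1 : ZMod 3) else (2 : ZMod 3)

instance : DecidableEq (Quandle.Dihedral 3) :=
  (inferInstance : DecidableEq (ZMod 3))

instance (n : ℕ) (a : Quandle.Dihedral n) (b : ZMod n) : Decidable (a = b) :=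
  (inferInstance : DecidableEq (ZMod n)) a b

lemma c_hom : ∀ A B : SL2F2, A*A = 1 → A ≠ 1 → B*B = 1 → B ≠ 1 →
    cmap (A * B * A⁻¹) = Quandle.dihedralAct 3 (cmap A) (cmap B) := by decide

lemma sq_ne (x : Q) : ρ x.1 * ρ x.1 = 1 ∧ ρ x.1 ≠ 1 := by
  obtain ⟨s, hs, hc⟩ := x.2
  rw [Set.mem_singleton_iff] at hs
  subst hs
  obtain ⟨u, hu⟩ := isConj_iff.mp hc
  rw [← hu]
  constructor
  · have h2 : ρ tSL2Z * ρ tSL2Z = 1 := by rw [ρ_t]; decide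
    calc ρ (u * tSL2Z * u⁻¹) * ρ (u * tSL2Z * u⁻¹)
        = ρ u * (ρ tSL2Z * ρ tSL2Z) * (ρ u)⁻¹ := by
          simp only [_root_.map_mul, _root_.map_inv]; group
      _ = 1 := by rw [h2]; group
  · intro h
    have : ρ tSL2Z = 1 := by
      have := congrArg (fun z => (ρ u)⁻¹ * z * ρ u) h
      simp only [_root_.map_mul, _root_.map_inv] at this ⊢
      group at this
      simpa using this
    rw [ρ_t] at this
    exact absurd this (by decide)

/-! the coloring as a quandle homomorphism -/

open Quandles

def fcol : Q →◃ Quandle.Dihedral 3 where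
  toFun x := cmap (ρ x.1)
  map_act' := by
    intro x y
    show cmap (ρ (x.1 * y.1 * x.1⁻¹)) = Quandle.dihedralAct 3 (cmap (ρ x.1)) (cmap (ρ y.1))
    rw [_root_.map_mul, _root_.map_mul, _root_.map_inv]
    obtain ⟨hx2, hx1⟩ := sq_ne x
    obtain ⟨hy2, hy1⟩ := sq_ne y
    exact c_hom _ _ hx2 hx1 hy2 hy1

/-! distinguished elements of the Dehn quandle -/

def qa : Q := ⟨tSL2Z, tSL2Z, rfl, IsConj.refl _⟩

lemma S_conj : ModularGroup.S * tSL2Z * ModularGroup.S⁻¹ = bSL2Z := by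
  rw [mul_inv_eq_iff_eq_mul]
  apply Subtype.ext
  show ModularGroup.S.1 * tSL2Z.1 = bSL2Z.1 * ModularGroup.S.1
  simp [ModularGroup.coe_S, tSL2Z, bSL2Z]

def qb : Q := ⟨bSL2Z, tSL2Z, rfl, isConj_iff.mpr ⟨ModularGroup.S, S_conj⟩⟩

lemma aba_bab : tSL2Z * bSL2Z * tSL2Z = bSL2Z * tSL2Z * bSL2Z := by
  apply Subtype.ext
  show tSL2Z.1 * bSL2Z.1 * tSL2Z.1 = bSL2Z.1 * tSL2Z.1 * bSL2Z.1
  simp [tSL2Z, bSL2Z]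

lemma qid1 : qa ◃ qb ◃ qa = qb := by
  apply Subtype.ext
  show tSL2Z * (bSL2Z * tSL2Z * bSL2Z⁻¹) * tSL2Z⁻¹ = bSL2Z
  calc tSL2Z * (bSL2Z * tSL2Z * bSL2Z⁻¹) * tSL2Z⁻¹
      = (tSL2Z * bSL2Z * tSL2Z) * (tSL2Z * bSL2Z)⁻¹ := by group
    _ = (bSL2Z * tSL2Z * bSL2Z) * (tSL2Z * bSL2Z)⁻¹ := by rw [aba_bab]
    _ = bSL2Z := by group

lemma qid2 : qb ◃ qa ◃ qb = qa := by
  apply Subtype.ext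
  show bSL2Z * (tSL2Z * bSL2Z * tSL2Z⁻¹) * bSL2Z⁻¹ = tSL2Z
  calc bSL2Z * (tSL2Z * bSL2Z * tSL2Z⁻¹) * bSL2Z⁻¹
      = (bSL2Z * tSL2Z * bSL2Z) * (bSL2Z * tSL2Z)⁻¹ := by group
    _ = (tSL2Z * bSL2Z * tSL2Z) * (bSL2Z * tSL2Z)⁻¹ := by rw [aba_bab]
    _ = tSL2Z := by group

lemma f_qa : fcol qa = (0 : ZMod 3) := by
  show cmap (ρ tSL2Z) = (0 : ZMod 3)
  rw [ρ_t]; decide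

lemma f_qb : fcol qb = (1 : ZMod 3) := by
  show cmap (ρ bSL2Z) = (1 : ZMod 3)
  rw [ρ_b]; decide

lemma f_qc : fcol (qa ◃ qb) = (2 : ZMod 3) := by
  rw [ShelfHom.map_act, f_qa, f_qb]
  show (2 * 0 - 1 : ZMod 3) = 2
  decide

/-! conjugation on the Dehn quandle -/

def cg (g : SL2Z) (y : Q) : Q :=
  ⟨g * y.1 * g⁻¹, by
    obtain ⟨s, hs, hc⟩ := y.2
    exact ⟨s, hs, hc.trans (isConj_iff.mpr ⟨g, rfl⟩)⟩⟩

lemma cg_one (y : Q) : cg 1 y = y := Subtype.ext (by show 1 * y.1 * 1⁻¹ = y.1; group)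

lemma cg_mul (g h : SL2Z) (y : Q) : cg (g * h) y = cg g (cg h y) :=
  Subtype.ext (by show (g*h) * y.1 * (g*h)⁻¹ = g * (h * y.1 * h⁻¹) * g⁻¹; group)

lemma cg_inv_cancel (g : SL2Z) (y : Q) : cg g (cg g⁻¹ y) = y :=
  Subtype.ext (by show g * (g⁻¹ * y.1 * g⁻¹⁻¹) * g⁻¹ = y.1; group)

lemma cg_t (y : Q) : cg tSL2Z y = qa ◃ y := Subtype.ext rfl

lemma cg_b (y : Q) : cg bSL2Z y = qb ◃ y := Subtype.ext rfl

/-! involutory facts for the dihedral quandle -/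

lemma d3_inv2 (a b : Quandle.Dihedral 3) : a ◃ a ◃ b = b :=
  Quandle.dihedralAct.inv 3 a b

lemma d3_invol : IsNQuandle (Quandle.Dihedral 3) 2 := fun x y => d3_inv2 y x

/-! quandle structure on `ULift` -/

instance uliftQuandle {α : Type u} [Quandle α] : Quandle (ULift.{v} α) where
  act x y := ⟨x.down ◃ y.down⟩
  self_distrib := by
    rintro ⟨x⟩ ⟨y⟩ ⟨z⟩
    exact congrArg ULift.up Shelf.self_distrib
  invAct x y := ⟨x.down ◃⁻¹ y.down⟩
  left_inv := by rintro ⟨x⟩ ⟨y⟩; exact congrArg ULift.up (Rack.left_inv x y)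
  right_inv := by rintro ⟨x⟩ ⟨y⟩; exact congrArg ULift.up (Rack.right_inv x y)
  fix := by rintro ⟨x⟩; exact congrArg ULift.up (Quandle.fix (x := x))

lemma d3u_invol : IsNQuandle (ULift.{v} (Quandle.Dihedral 3)) 2 := by
  rintro ⟨x⟩ y
  exact congrArg ULift.up (d3_inv2 y.down x)

def fup : Q →◃ ULift.{v} (Quandle.Dihedral 3) where
  toFun x := ⟨fcol x⟩
  map_act' := by intro x y; exact congrArg ULift.up fcol.map_act'


/-! the three-element map and its homomorphism property -/

instance : Fintype (Quandle.Dihedral 3) := (inferInstance : Fintype (ZMod 3))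

lemma tri : ∀ i : Quandle.Dihedral 3,
    i = (0 : ZMod 3) ∨ i = (1 : ZMod 3) ∨ i = (2 : ZMod 3) := by decide

def hmAux {Q2 : Type v} (A B C : Q2) : Quandle.Dihedral 3 → Q2 :=
  fun i => if i = (0 : ZMod 3) then A else if i = (1 : ZMod 3) then B else C

lemma hmAux0 {Q2 : Type v} (A B C : Q2) : hmAux A B C (0 : ZMod 3) = A := if_pos rfl

lemma hmAux1 {Q2 : Type v} (A B C : Q2) : hmAux A B C (1 : ZMod 3) = B := by
  unfold hmAux
  rfl

lemma hmAux2 {Q2 : Type v} (A B C : Q2) : hmAux A B C (2 : ZMod 3) = C := by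
  unfold hmAux
  rfl

lemma hmAux_hom {Q2 : Type v} [Quandle Q2] (A B C : Q2)
    (hAA : A ◃ A = A) (hBB : B ◃ B = B) (hCC : C ◃ C = C)
    (hAB : A ◃ B = C) (hBA : B ◃ A = C) (hAC : A ◃ C = B)
    (hCA : C ◃ A = B) (hBC : B ◃ C = A) (hCB : C ◃ B = A) :
    ∀ i j, hmAux A B C (i ◃ j) = hmAux A B C i ◃ hmAux A B C j := by
  intro i j
  rcases tri i with rfl | rfl | rfl <;> rcases tri j with rfl | rfl | rfl
  · rw [show (Shelf.act (α := Quandle.Dihedral 3) (0:ZMod 3) (0:ZMod 3))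
        = ((0:ZMod 3) : Quandle.Dihedral 3) from by decide, hmAux0]
    exact hAA.symm
  · rw [show (Shelf.act (α := Quandle.Dihedral 3) (0:ZMod 3) (1:ZMod 3))
        = ((2:ZMod 3) : Quandle.Dihedral 3) from by decide, hmAux2, hmAux0, hmAux1]
    exact hAB.symm
  · rw [show (Shelf.act (α := Quandle.Dihedral 3) (0:ZMod 3) (2:ZMod 3))
        = ((1:ZMod 3) : Quandle.Dihedral 3) from by decide, hmAux1, hmAux0, hmAux2]
    exact hAC.symm
  · rw [show (Shelf.act (α := Quandle.Dihedral 3) (1:ZMod 3) (0:ZMod 3))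
        = ((2:ZMod 3) : Quandle.Dihedral 3) from by decide, hmAux2, hmAux1, hmAux0]
    exact hBA.symm
  · rw [show (Shelf.act (α := Quandle.Dihedral 3) (1:ZMod 3) (1:ZMod 3))
        = ((1:ZMod 3) : Quandle.Dihedral 3) from by decide, hmAux1]
    exact hBB.symm
  · rw [show (Shelf.act (α := Quandle.Dihedral 3) (1:ZMod 3) (2:ZMod 3))
        = ((0:ZMod 3) : Quandle.Dihedral 3) from by decide, hmAux0, hmAux1, hmAux2]
    exact hBC.symm
  · rw [show (Shelf.act (α := Quandle.Dihedral 3) (2:ZMod 3) (0:ZMod 3))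
        = ((1:ZMod 3) : Quandle.Dihedral 3) from by decide, hmAux1, hmAux2, hmAux0]
    exact hCA.symm
  · rw [show (Shelf.act (α := Quandle.Dihedral 3) (2:ZMod 3) (1:ZMod 3))
        = ((0:ZMod 3) : Quandle.Dihedral 3) from by decide, hmAux0, hmAux2, hmAux1]
    exact hCB.symm
  · rw [show (Shelf.act (α := Quandle.Dihedral 3) (2:ZMod 3) (2:ZMod 3))
        = ((2:ZMod 3) : Quandle.Dihedral 3) from by decide, hmAux2]
    exact hCC.symm

end Stmt15Aux

open Stmt15Aux



/-- the universal involutory (2-)quandle quotient of the quandle of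
conjugates of `t` in `SL(2, ℤ)` is isomorphic to the dihedral quandle of order 3
(`ZMod 3` with, in Mathlib's conventions, `a ◃ b = 2a - b`, i.e. the paper's
`i * j = 2j - i`). -/
theorem stmt_15 {Q2 : Type v} [Quandle Q2]
    (π : DehnQuandle (Matrix.SpecialLinearGroup (Fin 2) ℤ) {tSL2Z} →◃ Q2)
    (hπ : IsUniversalNQuandleQuotient 2 π) :
    ∃ e : Q2 ≃ Quandle.Dihedral 3, ∀ x y : Q2, e (x ◃ y) = e x ◃ e y := by
  classical
  obtain ⟨hsurj, h2, huniv⟩ := hπ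
  have inv2 : ∀ y x : Q2, y ◃ y ◃ x = x := fun y x => h2 x y
  obtain ⟨g', hg', -⟩ := huniv (ULift (Quandle.Dihedral 3)) d3u_invol fup
  set A := π qa with hA
  set B := π qb with hB
  set C := π (qa ◃ qb) with hCdef
  have hC : C = A ◃ B := by rw [hCdef, ShelfHom.map_act]
  have hABA : A ◃ B ◃ A = B := by
    rw [hA, hB, ← ShelfHom.map_act, ← ShelfHom.map_act, qid1]
  have hBAB : B ◃ A ◃ B = A := by
    rw [hA, hB, ← ShelfHom.map_act, ← ShelfHom.map_act, qid2]
  have r2 : B ◃ A = C := by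
    have h := congrArg (fun z => A ◃ z) hABA
    rw [inv2 A (B ◃ A)] at h
    rw [h, hC]
  have r3 : A ◃ C = B := by rw [hC]; exact inv2 A B
  have r4 : C ◃ A = B := by
    have h : (A ◃ B) ◃ (A ◃ A) = B := by rw [← Shelf.self_distrib]; exact hABA
    rwa [Quandle.fix (x := A), ← hC] at h
  have r5 : B ◃ C = A := by rw [hC]; exact hBAB
  have r6 : C ◃ B = A := by
    have h := Shelf.self_distrib (x := B) (y := A) (z := B)
    rw [hBAB, Quandle.fix (x := B), r2] at h
    exact h.symm
  set hm : Quandle.Dihedral 3 → Q2 := hmAux A B C with hhm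
  have hm0 : hm (0 : ZMod 3) = A := hmAux0 A B C
  have hm1 : hm (1 : ZMod 3) = B := hmAux1 A B C
  have hm2 : hm (2 : ZMod 3) = C := hmAux2 A B C
  have hm_hom : ∀ i j : Quandle.Dihedral 3, hm (i ◃ j) = hm i ◃ hm j :=
    hmAux_hom A B C (Quandle.fix (x := A)) (Quandle.fix (x := B)) (Quandle.fix (x := C))
      (hC.symm) r2 r3 r4 r5 r6
  -- the coloring is compatible with π
  have step : ∀ z y : DehnQuandle SL2Z {tSL2Z}, π z = hm (fcol z) → π y = hm (fcol y) →
      π (z ◃ y) = hm (fcol (z ◃ y)) := by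
    intro z y hz hy
    rw [ShelfHom.map_act, ShelfHom.map_act, hz, hy, hm_hom]
  have stepInv : ∀ z y : DehnQuandle SL2Z {tSL2Z}, π z = hm (fcol z) → π y = hm (fcol y) →
      π (z ◃⁻¹ y) = hm (fcol (z ◃⁻¹ y)) := by
    intro z y hz hy
    have h1 : π (z ◃⁻¹ y) = π z ◃ π y := by
      calc π (z ◃⁻¹ y) = π z ◃ π z ◃ π (z ◃⁻¹ y) := (inv2 _ _).symm
        _ = π z ◃ π y := by rw [← ShelfHom.map_act, Rack.act_invAct_eq]
    have h2 : fcol (z ◃⁻¹ y) = fcol z ◃ fcol y := by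
      calc fcol (z ◃⁻¹ y) = fcol z ◃ fcol z ◃ fcol (z ◃⁻¹ y) := (d3_inv2 _ _).symm
        _ = fcol z ◃ fcol y := by rw [← ShelfHom.map_act, Rack.act_invAct_eq]
    rw [h1, h2, hz, hy, hm_hom]
  have goodA : π qa = hm (fcol qa) := by rw [f_qa, hm0]
  have goodB : π qb = hm (fcol qb) := by rw [f_qb, hm1]
  let Hsub : Subgroup SL2Z :=
    { carrier := {g | ∀ y : DehnQuandle SL2Z {tSL2Z},
        (π y = hm (fcol y)) ↔ (π (cg g y) = hm (fcol (cg g y)))}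
      one_mem' := by intro y; rw [cg_one]
      mul_mem' := by
        intro g h hg hh y
        rw [cg_mul]
        exact (hh y).trans (hg (cg h y))
      inv_mem' := by
        intro g hg y
        have h := hg (cg g⁻¹ y)
        rw [cg_inv_cancel] at h
        exact h.symm }
  have htH : tSL2Z ∈ Hsub := by
    intro y
    constructor
    · intro hy
      rw [cg_t]
      exact step qa y goodA hy
    · intro hy
      rw [cg_t] at hy
      have h2' := stepInv qa (qa ◃ y) goodA hy
      rwa [Rack.invAct_act_eq] at h2'
  have hbH : bSL2Z ∈ Hsub := by
    intro y
    constructor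
    · intro hy
      rw [cg_b]
      exact step qb y goodB hy
    · intro hy
      rw [cg_b] at hy
      have h2' := stepInv qb (qb ◃ y) goodB hy
      rwa [Rack.invAct_act_eq] at h2'
  have hcl : Subgroup.closure ({tSL2Z, bSL2Z} : Set SL2Z) ≤ Hsub := by
    rw [Subgroup.closure_le]
    rintro x hx
    simp only [Set.mem_insert_iff, Set.mem_singleton_iff] at hx
    rcases hx with rfl | rfl
    · exact htH
    · exact hbH
  have key : ∀ x : DehnQuandle SL2Z {tSL2Z}, π x = hm (fcol x) := by
    intro x
    obtain ⟨s, hs, hc⟩ := x.2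
    rw [Set.mem_singleton_iff] at hs
    subst hs
    obtain ⟨u, hu⟩ := isConj_iff.mp hc
    have hx : x = cg u qa := Subtype.ext hu.symm
    rw [hx]
    exact ((hcl (mem_closure_ab u)) qa).mp goodA
  have gπ : ∀ x : DehnQuandle SL2Z {tSL2Z}, (g' (π x)).down = fcol x :=
    fun x => congrArg ULift.down (hg' x)
  obtain ⟨gid, hgid, hgiduniq⟩ := huniv Q2 h2 π
  let hgcomp : Q2 →◃ Q2 :=
    { toFun := fun z => hm (g' z).down
      map_act' := by
        intro x y
        have h1 : (g' (x ◃ y)).down = (g' x).down ◃ (g' y).down := by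
          rw [ShelfHom.map_act]; exact rfl
        show hm (g' (x ◃ y)).down = hm (g' x).down ◃ hm (g' y).down
        rw [h1, hm_hom] }
  have hcomp : ∀ x, hgcomp (π x) = π x := by
    intro x
    show hm (g' (π x)).down = π x
    rw [gπ, key x]
  have hid : ∀ x, (ShelfHom.id Q2) (π x) = π x := fun x => rfl
  have heq : hgcomp = ShelfHom.id Q2 :=
    (hgiduniq hgcomp hcomp).trans (hgiduniq (ShelfHom.id Q2) hid).symm
  have hleft : ∀ z : Q2, hm (g' z).down = z :=
    fun z => congrArg (fun (F : Q2 →◃ Q2) => F z) heq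
  have hright : ∀ i : Quandle.Dihedral 3, (g' (hm i)).down = i := by
    intro i
    rcases tri i with rfl | rfl | rfl
    · rw [hm0, hA, gπ, f_qa]
    · rw [hm1, hB, gπ, f_qb]
    · rw [hm2, hCdef, gπ, f_qc]
  refine ⟨⟨fun z => (g' z).down, hm, hleft, hright⟩, ?_⟩
  intro x y
  show (g' (x ◃ y)).down = (g' x).down ◃ (g' y).down
  rw [ShelfHom.map_act]; exact rfl
end
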